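/- arXiv:2404.04955 — 3 statements merged into one kernel-verified Lean document; each statement's English description precedes it below -/
import Mathlib

section
/- Let (t_j) be positive reals with t_j → ∞ and j = o(t_j) as j→∞. Put κ(j) = ( (1 + 4j/t_j)^{1/2} − 1 )/2 and G(z) = (1 + 1/z) e^{1/(1+z)} for z>0. Then, as j→∞, Σ_{i=0}^{j} C(j,i) t_j^i / i! ~ (2πj)^{-1/2} (G(κ(j)))^j. -/
open Filter Asymptotics
open scoped Topology

noncomputable section

open Finset
open scoped Nat

namespace LagAux

/-- `1/(u+1) ≤ log (u+1) - log u` for `u ≥ 1`. -/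
lemma log_ineq1 {u : ℝ} (hu : 1 ≤ u) : 1/(u+1) ≤ Real.log (u+1) - Real.log u := by
  have hu0 : 0 < u := by linarith
  have hu1 : 0 < u + 1 := by linarith
  have h := Real.log_le_sub_one_of_pos (show 0 < u/(u+1) by positivity)
  rw [Real.log_div hu0.ne' hu1.ne'] at h
  have : u/(u+1) - 1 = -(1/(u+1)) := by field_simp; ring
  linarith [this ▸ h]

/-- `(u-1)*(log u - log (u-1)) ≤ 1` for `u > 1`. -/
lemma log_ineq2 {u : ℝ} (hu : 1 < u) : (u-1)*(Real.log u - Real.log (u-1)) ≤ 1 := by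
  have h0 : 0 < u - 1 := by linarith
  have h := Real.log_le_sub_one_of_pos (show 0 < u/(u-1) by positivity)
  rw [Real.log_div (by linarith : u ≠ 0) h0.ne'] at h
  have h2 : u/(u-1) - 1 = 1/(u-1) := by field_simp; ring
  rw [h2] at h
  calc (u-1)*(Real.log u - Real.log (u-1)) ≤ (u-1)*(1/(u-1)) := by
        apply mul_le_mul_of_nonneg_left h h0.le
    _ = 1 := by field_simp

/-- `s - s * log s ≤ 1` for `s ≥ 0`. -/
lemma ent_le_one {s : ℝ} (hs : 0 ≤ s) : s - s*Real.log s ≤ 1 := by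
  rcases eq_or_lt_of_le hs with h | h
  · simp [← h]
  · have h1 := Real.log_le_sub_one_of_pos (show 0 < 1/s by positivity)
    rw [one_div, Real.log_inv] at h1
    nlinarith [mul_le_mul_of_nonneg_left h1 h.le, mul_inv_cancel₀ h.ne']

/-- `1 - s + s * log s ≤ (s-1)^2` for `s ≥ 0`. -/
lemma ent_ge {s : ℝ} (hs : 0 ≤ s) : 1 - s + s*Real.log s ≤ (s-1)^2 := by
  rcases eq_or_lt_of_le hs with h | h
  · rw [← h]; norm_num
  · have h1 := Real.log_le_sub_one_of_pos h
    nlinarith [h1]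


/-- Step lemma (upper): `log(u/d) ≤ Λ(y) - Λ(y-1)` where `u = j - y ≥ 1`. -/
lemma lamstep1 {d u : ℝ} (hd : 0 < d) (hu : 1 ≤ u) :
    Real.log (u/d) ≤ (u - u*Real.log (u/d)) - ((u+1) - (u+1)*Real.log ((u+1)/d)) := by
  have hu0 : 0 < u := by linarith
  have hu1 : 0 < u + 1 := by linarith
  have h := log_ineq1 hu
  rw [Real.log_div hu0.ne' hd.ne', Real.log_div hu1.ne' hd.ne']
  have h2 : 1 ≤ (u+1) * (Real.log (u+1) - Real.log u) := by
    have := mul_le_mul_of_nonneg_left h hu1.le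
    rw [mul_one_div, div_self hu1.ne'] at this
    linarith
  nlinarith [h2]

/-- Step lemma (lower): `Λ(y+1) - Λ(y) ≤ log(u/d)` where `u = j - y ≥ 1`. -/
lemma lamstep2 {d u : ℝ} (hd : 0 < d) (hu : 1 ≤ u) :
    ((u-1) - (u-1)*Real.log ((u-1)/d)) - (u - u*Real.log (u/d)) ≤ Real.log (u/d) := by
  rcases eq_or_lt_of_le hu with h | h
  · rw [← h]; norm_num
  · have hu0 : 0 < u := by linarith
    have hum : 0 < u - 1 := by linarith
    have hl := log_ineq2 h
    rw [Real.log_div hu0.ne' hd.ne', Real.log_div hum.ne' hd.ne']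
    nlinarith [hl]

/-- `Λ(y) ≤ d` where `u = j - y ≥ 0`. -/
lemma lam_le {d u : ℝ} (hd : 0 < d) (hu : 0 ≤ u) : u - u*Real.log (u/d) ≤ d := by
  have hs : 0 ≤ u/d := by positivity
  have h := ent_le_one hs
  have h2 := mul_le_mul_of_nonneg_left h hd.le
  have h3 : d * (u/d) = u := by field_simp
  calc u - u*Real.log (u/d) = d * (u/d - u/d * Real.log (u/d)) := by
        field_simp
    _ ≤ d * 1 := h2
    _ = d := mul_one d

/-- `Λ(m) - Λ(y) ≤ (u-d)^2/d` where `u = j - y ≥ 0`. -/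
lemma lam_ge {d u : ℝ} (hd : 0 < d) (hu : 0 ≤ u) :
    d - (u - u*Real.log (u/d)) ≤ (u-d)^2/d := by
  have hs : 0 ≤ u/d := by positivity
  have h := ent_ge hs
  have h2 := mul_le_mul_of_nonneg_left h hd.le
  have key : d * (1 - u/d + u/d*Real.log (u/d)) = d - (u - u*Real.log (u/d)) := by
    field_simp; ring
  have key2 : d * (u/d - 1)^2 = (u-d)^2/d := by field_simp
  nlinarith [h2]

/-- `Λ(0) - Λ(-1) ≤ log((u+1)/d)` with `u = j ≥ 1`. -/
lemma lamE {d u : ℝ} (hd : 0 < d) (hu : 1 ≤ u) :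
    (u - u*Real.log (u/d)) - ((u+1) - (u+1)*Real.log ((u+1)/d)) ≤ Real.log ((u+1)/d) := by
  have hu0 : 0 < u := by linarith
  have hu1 : 0 < u + 1 := by linarith
  have h := Real.log_le_sub_one_of_pos (show 0 < (u+1)/u by positivity)
  rw [Real.log_div hu1.ne' hu0.ne'] at h
  have h2 : (u+1)/u - 1 = 1/u := by field_simp; ring
  rw [h2] at h
  have h3 : u * (Real.log (u+1) - Real.log u) ≤ 1 := by
    have := mul_le_mul_of_nonneg_left h hu0.le
    rw [mul_one_div, div_self hu0.ne'] at this
    linarith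
  rw [Real.log_div hu0.ne' hd.ne', Real.log_div hu1.ne' hd.ne']
  nlinarith [h3]


/-- First-moment identity for truncated Poisson-type sums. -/
lemma moment1 (m : ℝ) (q : ℕ) :
    ∑ k ∈ range (q+1), (k:ℝ)*(m^k/k !) = m * ∑ k ∈ range q, m^k/k ! := by
  rw [Finset.sum_range_succ']
  simp only [Nat.cast_zero, zero_mul, pow_zero, add_zero]
  rw [Finset.mul_sum]
  apply Finset.sum_congr rfl
  intro k _
  have : ((k+1)! : ℝ) = (k+1) * k ! := by
    rw [Nat.factorial_succ]; push_cast; ring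
  rw [this]
  have hk1 : ((k:ℝ)+1) ≠ 0 := by positivity
  field_simp
  push_cast; ring

/-- Second-moment identity for truncated Poisson-type sums. -/
lemma moment2 (m : ℝ) (q : ℕ) :
    ∑ k ∈ range (q+2), (k:ℝ)*((k:ℝ)-1)*(m^k/k !) = m^2 * ∑ k ∈ range q, m^k/k ! := by
  rw [Finset.sum_range_succ', Finset.sum_range_succ']
  simp only [Nat.cast_zero, Nat.cast_one, zero_mul, mul_zero, pow_zero, sub_self, one_mul]
  norm_num
  rw [Finset.mul_sum]
  apply Finset.sum_congr rfl
  intro k _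
  have h1 : ((k+1+1)! : ℝ) = (k+2) * ((k+1) * k !) := by
    rw [Nat.factorial_succ, Nat.factorial_succ]; push_cast; ring
  rw [h1]
  have hk1 : ((k:ℝ)+1) ≠ 0 := by positivity
  have hk2 : ((k:ℝ)+2) ≠ 0 := by positivity
  have hf : (k ! : ℝ) ≠ 0 := by positivity
  push_cast
  field_simp
  ring

/-- Variance-type bound: `∑_{k≤n} (k-m)^2 m^k/k! ≤ m e^m` when `0 ≤ m ≤ n`. -/
lemma sum_sq_le {m : ℝ} (hm : 0 ≤ m) {n : ℕ} (hn : 1 ≤ n) (hmn : m ≤ (n:ℝ)) :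
    ∑ k ∈ range (n+1), ((k:ℝ)-m)^2*(m^k/k !) ≤ m * Real.exp m := by
  obtain ⟨p, rfl⟩ : ∃ p, n = p + 1 := ⟨n - 1, (Nat.succ_pred_eq_of_pos hn).symm⟩
  have expand : ∀ k ∈ range (p+2), ((k:ℝ)-m)^2*(m^k/k !) =
      (k:ℝ)*((k:ℝ)-1)*(m^k/k !) + (1-2*m)*((k:ℝ)*(m^k/k !)) + m^2*(m^k/k !) := by
    intro k _; ring
  rw [Finset.sum_congr rfl expand]
  rw [Finset.sum_add_distrib, Finset.sum_add_distrib, ← Finset.mul_sum, ← Finset.mul_sum]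
  have e2 := moment2 m p
  have e1 := moment1 m (p+1)
  rw [e2, e1]
  set F : ℕ → ℝ := fun q => ∑ k ∈ range q, m^k/k ! with hF
  have hF1 : F (p+1) = F p + m^p/p ! := Finset.sum_range_succ _ p
  have hF2 : F (p+2) = F (p+1) + m^(p+1)/((p+1)) ! := Finset.sum_range_succ _ (p+1)
  have hFle : F (p+1) ≤ Real.exp m := Real.sum_le_exp_of_nonneg hm _
  have hstep : m^(p+1)/((p+1)) ! ≤ m^p/p ! := by
    have h1 : ((p+1)! : ℝ) = (p+1) * p ! := by rw [Nat.factorial_succ]; push_cast; ring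
    rw [h1, pow_succ]
    rw [div_le_div_iff₀ (by positivity) (by positivity)]
    have hmp : (0:ℝ) ≤ m^p := by positivity
    have hfp : (0:ℝ) < p ! := by positivity
    have hm1 : m ≤ (p:ℝ)+1 := by push_cast at hmn ⊢; linarith
    nlinarith [mul_le_mul_of_nonneg_right hm1 (mul_nonneg hmp hfp.le)]
  have hFpos : 0 ≤ F (p+1) := by
    apply Finset.sum_nonneg; intro k _; positivity
  -- total = m^2 F p + (1-2m) m F(p+1) + m^2 F(p+2)
  --       = m F(p+1) + m^2 (F p - 2 F(p+1) + F(p+2)) and the bracket ≤ 0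
  have hbr : F p - 2*F (p+1) + F (p+2) ≤ 0 := by
    rw [hF2]
    have := hF1
    linarith
  nlinarith [sq_nonneg m, hbr, hFle, hFpos]


lemma pow_le_exp_mul_factorial (n : ℕ) : ((n:ℝ))^n ≤ Real.exp n * n ! := by
  have h1 : ((n:ℝ))^n/n ! ≤ ∑ k ∈ range (n+1), (n:ℝ)^k/k ! :=
    Finset.single_le_sum (f := fun k => (n:ℝ)^k/k !) (fun k _ => by positivity)
      (self_mem_range_succ n)
  have h2 := Real.sum_le_exp_of_nonneg (Nat.cast_nonneg n) (n+1)
  have hf : (0:ℝ) < n ! := by positivity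
  have h3 := le_trans h1 h2
  rw [div_le_iff₀ hf] at h3
  linarith

set_option maxHeartbeats 1000000 in
lemma tail_le {m : ℝ} (hm : 0 ≤ m) {n : ℕ} (h2 : 2*m ≤ (n:ℝ)+1) :
    Real.exp m - ∑ k ∈ range (n+1), m^k/k ! ≤ 2*(m^(n+1)/(n+1)!) := by
  have hsum : Summable (fun k : ℕ => m^k/k !) := Real.summable_pow_div_factorial m
  have hexp : Real.exp m = ∑' k : ℕ, m^k/k ! := by
    rw [Real.exp_eq_exp_ℝ, NormedSpace.exp_eq_tsum_div]
  have split := hsum.sum_add_tsum_nat_add (n+1)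
  have hterm : ∀ k : ℕ, m^(k+(n+1))/(k+(n+1))! ≤ (m^(n+1)/(n+1)!) * (1/2:ℝ)^k := by
    intro k
    induction k with
    | zero => simp
    | succ k ih =>
      have key : m^(k+1+(n+1))/((k+1+(n+1)))! = (m/((k:ℝ)+(n:ℝ)+2)) * (m^(k+(n+1))/(k+(n+1))!) := by
        rw [show k+1+(n+1) = (k+(n+1))+1 from by ring, Nat.factorial_succ, pow_succ']
        push_cast
        have e1 : ((k:ℝ)+(n:ℝ)+2) ≠ 0 := by positivity
        have e2 : ((k+(n+1))! : ℝ) ≠ 0 := by positivity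
        field_simp
        ring_nf
      rw [key]
      have hhalf : m/((k:ℝ)+(n:ℝ)+2) ≤ 1/2 := by
        rw [div_le_div_iff₀ (by positivity) (by norm_num)]
        linarith
      have hpos : 0 ≤ m^(k+(n+1))/(k+(n+1))! := by positivity
      have hpos2 : 0 ≤ m/((k:ℝ)+(n:ℝ)+2) := by positivity
      calc (m/((k:ℝ)+(n:ℝ)+2)) * (m^(k+(n+1))/(k+(n+1))!)
          ≤ (1/2) * ((m^(n+1)/(n+1)!) * (1/2:ℝ)^k) := by
            apply mul_le_mul hhalf ih hpos (by norm_num)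
        _ = (m^(n+1)/(n+1)!) * (1/2:ℝ)^(k+1) := by ring
  have hgs : Summable (fun k : ℕ => (m^(n+1)/(n+1)!) * (1/2:ℝ)^k) :=
    (summable_geometric_of_lt_one (by norm_num) (by norm_num)).mul_left _
  have hshift : Summable (fun k : ℕ => m^(k+(n+1))/(k+(n+1))!) :=
    (summable_nat_add_iff (n+1)).2 hsum
  have htail : ∑' k : ℕ, m^(k+(n+1))/(k+(n+1))! ≤ 2*(m^(n+1)/(n+1)!) := by
    calc ∑' k : ℕ, m^(k+(n+1))/(k+(n+1))! ≤ ∑' k : ℕ, (m^(n+1)/(n+1)!) * (1/2:ℝ)^k :=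
          Summable.tsum_le_tsum hterm hshift hgs
      _ = (m^(n+1)/(n+1)!) * ∑' k : ℕ, (1/2:ℝ)^k := tsum_mul_left
      _ = 2*(m^(n+1)/(n+1)!) := by
          rw [tsum_geometric_of_lt_one (by norm_num) (by norm_num)]; norm_num; ring
  have : Real.exp m - ∑ k ∈ range (n+1), m^k/k ! = ∑' k : ℕ, m^(k+(n+1))/(k+(n+1))! := by
    rw [hexp]; linarith [split]
  rw [this]
  exact htail


/-- The fluctuation exponent. -/
def Phi (n : ℕ) (t κ : ℝ) (k : ℕ) : ℝ :=
  2*(∑ i ∈ Finset.range k, Real.log (((n:ℝ) - i)/(t*κ)))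
    - 2*n*Real.log ((n:ℝ)/(t*κ)) + 2*((n:ℝ) - t*κ)

/-- The normalized sum. -/
def XX (n : ℕ) (t κ : ℝ) : ℝ :=
  Real.exp (-((n:ℝ) - t*κ)) *
    ∑ k ∈ Finset.range (n+1), (((n:ℝ) - t*κ)^k/(k ! : ℝ)) * Real.exp (Phi n t κ k)

section Core

variable {n : ℕ} {t κ : ℝ}

lemma m_eq (hid : t*κ*(1+κ) = (n:ℝ)) : (n:ℝ) - t*κ = (t*κ)*κ := by linear_combination -hid

lemma tm_eq (hid : t*κ*(1+κ) = (n:ℝ)) : t*((n:ℝ) - t*κ) = (t*κ)^2 := by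
  linear_combination (-t) * hid

lemma prod_mul_factorial : ∀ k ≤ n, (∏ i ∈ Finset.range k, ((n:ℝ) - i)) * ((n-k)! : ℝ) = (n ! : ℝ) := by
  intro k
  induction k with
  | zero => simp
  | succ k ih =>
    intro hk
    have hk' : k ≤ n := le_of_lt hk
    rw [Finset.prod_range_succ]
    have h1 : (n - k) = (n - (k+1)) + 1 := by omega
    have h2 : ((n - k)! : ℝ) = ((n:ℝ) - k) * ((n - (k+1))! : ℝ) := by
      have hc : ((n - (k+1) + 1 : ℕ) : ℝ) = (n:ℝ) - k := by
        rw [show n - (k+1) + 1 = n - k by omega, Nat.cast_sub hk']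
      rw [h1, Nat.factorial_succ, Nat.cast_mul, hc]
    calc (∏ i ∈ Finset.range k, ((n:ℝ) - i)) * ((n:ℝ) - k) * ((n-(k+1))! : ℝ)
        = (∏ i ∈ Finset.range k, ((n:ℝ) - i)) * (((n:ℝ) - k) * ((n-(k+1))! : ℝ)) := by ring
      _ = (∏ i ∈ Finset.range k, ((n:ℝ) - i)) * ((n - k)! : ℝ) := by rw [h2]
      _ = (n ! : ℝ) := ih hk'

lemma exp_Phi (hn : 1 ≤ n) (ht : 0 < t) (hκ : 0 < κ) {k : ℕ} (hk : k ≤ n) :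
    Real.exp (Phi n t κ k) =
      (∏ i ∈ Finset.range k, (((n:ℝ) - i)/(t*κ)))^2 * ((t*κ)/(n:ℝ))^(2*n)
        * Real.exp (2*((n:ℝ) - t*κ)) := by
  have hd : 0 < t*κ := mul_pos ht hκ
  have hj : 0 < (n:ℝ) := by exact_mod_cast Nat.pos_of_ne_zero (by omega)
  have hjd : 0 < (n:ℝ)/(t*κ) := by positivity
  rw [Phi, Real.exp_add, Real.exp_sub]
  have hexpA : Real.exp (2*(∑ i ∈ Finset.range k, Real.log (((n:ℝ) - i)/(t*κ))))
      = (∏ i ∈ Finset.range k, (((n:ℝ) - i)/(t*κ)))^2 := by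
    rw [two_mul, Real.exp_add, ← sq, Real.exp_sum]
    congr 1
    apply Finset.prod_congr rfl
    intro i hi
    have hi' : (i:ℝ) < (n:ℝ) := by
      have : i < n := lt_of_lt_of_le (Finset.mem_range.1 hi) hk
      exact_mod_cast this
    exact Real.exp_log (div_pos (by linarith) hd)
  have hexpB : Real.exp (2*(n:ℝ)*Real.log ((n:ℝ)/(t*κ))) = ((n:ℝ)/(t*κ))^(2*n) := by
    rw [show (2:ℝ)*(n:ℝ)*Real.log ((n:ℝ)/(t*κ)) = ((2*n : ℕ):ℝ)*Real.log ((n:ℝ)/(t*κ)) by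
        push_cast; ring]
    rw [Real.exp_nat_mul, Real.exp_log hjd]
  rw [hexpA, hexpB, div_eq_mul_inv, ← inv_pow, inv_div]

lemma weight_eq (hn : 1 ≤ n) (ht : 0 < t) (hκ : 0 < κ) (hid : t*κ*(1+κ) = (n:ℝ))
    {k : ℕ} (hk : k ≤ n) :
    ((n:ℝ)/(t*κ))^(2*n) * Real.exp (-(2*((n:ℝ) - t*κ))) *
      ((((n:ℝ) - t*κ)^k/(k ! : ℝ)) * Real.exp (Phi n t κ k))
      = ((n ! : ℝ)/((n-k)! : ℝ))^2 / ((k ! : ℝ) * t^k) := by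
  have hd : 0 < t*κ := mul_pos ht hκ
  have hj : 0 < (n:ℝ) := by exact_mod_cast Nat.pos_of_ne_zero (by omega)
  have hm : 0 < (n:ℝ) - t*κ := by rw [m_eq hid]; positivity
  have h1 : ((n:ℝ)/(t*κ))^(2*n) * ((t*κ)/(n:ℝ))^(2*n) = 1 := by
    rw [← mul_pow, div_mul_div_comm, mul_comm ((n:ℝ)) (t*κ), div_self (by positivity), one_pow]
  have h2 : Real.exp (-(2*((n:ℝ) - t*κ))) * Real.exp (2*((n:ℝ) - t*κ)) = 1 := by
    rw [← Real.exp_add]; simp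
  have hprod : (∏ i ∈ Finset.range k, (((n:ℝ) - i)/(t*κ)))
      = ((n ! : ℝ)/((n-k)! : ℝ))/(t*κ)^k := by
    rw [Finset.prod_div_distrib, Finset.prod_const, Finset.card_range]
    congr 1
    have hB : ((n-k)! : ℝ) ≠ 0 := by positivity
    field_simp [← prod_mul_factorial k hk]; exact prod_mul_factorial k hk
  have htm2 : ((t*κ)^k)^2 = t^k * ((n:ℝ) - t*κ)^k := by
    rw [← pow_mul, mul_comm k 2, pow_mul, ← tm_eq hid, mul_pow]
  rw [exp_Phi hn ht hκ hk, hprod]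
  calc ((n:ℝ)/(t*κ))^(2*n) * Real.exp (-(2*((n:ℝ) - t*κ))) *
      ((((n:ℝ) - t*κ)^k/(k ! : ℝ)) *
        ((((n ! : ℝ)/((n-k)! : ℝ))/(t*κ)^k)^2 * ((t*κ)/(n:ℝ))^(2*n)
          * Real.exp (2*((n:ℝ) - t*κ))))
      = (((n:ℝ)/(t*κ))^(2*n) * ((t*κ)/(n:ℝ))^(2*n)) *
        (Real.exp (-(2*((n:ℝ) - t*κ))) * Real.exp (2*((n:ℝ) - t*κ))) *
        ((((n:ℝ) - t*κ)^k/(k ! : ℝ)) * (((n ! : ℝ)/((n-k)! : ℝ))^2/(((t*κ)^k)^2))) := by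
        ring
    _ = (((n:ℝ) - t*κ)^k/(k ! : ℝ)) * (((n ! : ℝ)/((n-k)! : ℝ))^2/(t^k * ((n:ℝ) - t*κ)^k)) := by
        rw [h1, h2, htm2]; ring
    _ = ((n ! : ℝ)/((n-k)! : ℝ))^2 / ((k ! : ℝ) * t^k) := by
        have e1 : ((n:ℝ) - t*κ)^k ≠ 0 := by positivity
        have e2 : (k ! : ℝ) ≠ 0 := by positivity
        have e3 : t^k ≠ 0 := by positivity
        field_simp

lemma term_eq (hn : 1 ≤ n) (ht : 0 < t) (hκ : 0 < κ) (hid : t*κ*(1+κ) = (n:ℝ))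
    {k : ℕ} (hk : k ≤ n) :
    (n.choose (n-k) : ℝ) * t^(n-k) / ((n-k)! : ℝ) =
      (t^n/(n ! : ℝ)) * (((n:ℝ)/(t*κ))^(2*n) * Real.exp (-(2*((n:ℝ) - t*κ))) *
        ((((n:ℝ) - t*κ)^k/(k ! : ℝ)) * Real.exp (Phi n t κ k))) := by
  rw [weight_eq hn ht hκ hid hk]
  have hchoose : (n.choose (n-k) : ℝ) * ((n-k)! : ℝ) * (k ! : ℝ) = (n ! : ℝ) := by
    have := Nat.choose_mul_factorial_mul_factorial (Nat.sub_le n k)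
    rw [Nat.sub_sub_self hk] at this
    exact_mod_cast this
  have htk : t^n = t^(n-k) * t^k := by rw [← pow_add, Nat.sub_add_cancel hk]
  have e1 : ((n-k)! : ℝ) ≠ 0 := by positivity
  have e2 : (k ! : ℝ) ≠ 0 := by positivity
  have e3 : (n ! : ℝ) ≠ 0 := by positivity
  have e4 : t^k ≠ 0 := by positivity
  have hA : (n.choose (n-k) : ℝ) = (n ! : ℝ)/(((n-k)! : ℝ) * (k ! : ℝ)) := by
    rw [eq_div_iff (by positivity)]
    linear_combination hchoose
  rw [htk, hA]
  field_simp

lemma sum_eq (hn : 1 ≤ n) (ht : 0 < t) (hκ : 0 < κ) (hid : t*κ*(1+κ) = (n:ℝ)) :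
    ∑ i ∈ Finset.range (n+1), (n.choose i : ℝ) * t^i / (i ! : ℝ)
      = (t^n/(n ! : ℝ)) * ((n:ℝ)/(t*κ))^(2*n) * Real.exp (-((n:ℝ) - t*κ)) * XX n t κ := by
  rw [← Finset.sum_range_reflect]
  have step : ∀ k ∈ Finset.range (n+1),
      (n.choose (n+1-1-k) : ℝ) * t^(n+1-1-k) / ((n+1-1-k)! : ℝ)
      = (t^n/(n ! : ℝ)) * (((n:ℝ)/(t*κ))^(2*n) * Real.exp (-(2*((n:ℝ) - t*κ))) *
        ((((n:ℝ) - t*κ)^k/(k ! : ℝ)) * Real.exp (Phi n t κ k))) := by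
    intro k hk
    have hk' : k ≤ n := by
      have := Finset.mem_range.1 hk; omega
    have h : n+1-1-k = n-k := by omega
    rw [h]
    exact term_eq hn ht hκ hid hk'
  rw [Finset.sum_congr rfl step, ← Finset.mul_sum, XX, ← Finset.mul_sum]
  rw [show Real.exp (-(2*((n:ℝ) - t*κ))) = Real.exp (-((n:ℝ) - t*κ)) * Real.exp (-((n:ℝ) - t*κ)) by
    rw [← Real.exp_add]; ring_nf]
  ring


lemma sumg_le (hn : 1 ≤ n) (ht : 0 < t) (hκ : 0 < κ) {k : ℕ} (hk : k ≤ n) :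
    ∑ i ∈ Finset.range k, Real.log (((n:ℝ) - i)/(t*κ))
      ≤ t*κ - (((n:ℝ)+1) - ((n:ℝ)+1)*Real.log (((n:ℝ)+1)/(t*κ))) := by
  have hd : 0 < t*κ := mul_pos ht hκ
  set f : ℕ → ℝ := fun i =>
    ((n:ℝ) - i + 1) - ((n:ℝ) - i + 1)*Real.log (((n:ℝ) - i + 1)/(t*κ)) with hf
  have hstep : ∀ i ∈ Finset.range k, Real.log (((n:ℝ) - i)/(t*κ)) ≤ f (i+1) - f i := by
    intro i hi
    have hin : i < n := lt_of_lt_of_le (Finset.mem_range.1 hi) hk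
    have hu : 1 ≤ (n:ℝ) - i := by
      have : (i:ℝ) + 1 ≤ (n:ℝ) := by exact_mod_cast hin
      linarith
    have h := lamstep1 hd hu
    have e1 : ((i+1 : ℕ):ℝ) = (i:ℝ) + 1 := by push_cast; ring
    have e2 : (n:ℝ) - ((i:ℝ)+1) + 1 = (n:ℝ) - i := by ring
    simp only [hf, e1, e2]
    convert h using 3 <;> ring
  have htel : ∑ i ∈ Finset.range k, (f (i+1) - f i) = f k - f 0 := Finset.sum_range_sub f k
  have hsum := Finset.sum_le_sum hstep
  rw [htel] at hsum
  have hfk : f k ≤ t*κ := by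
    have hu : (0:ℝ) ≤ (n:ℝ) - k + 1 := by
      have : (k:ℝ) ≤ (n:ℝ) := by exact_mod_cast hk
      linarith
    exact lam_le hd hu
  have hf0 : f 0 = ((n:ℝ)+1) - ((n:ℝ)+1)*Real.log (((n:ℝ)+1)/(t*κ)) := by
    simp only [hf]; norm_num
  rw [hf0] at hsum
  clear_value f
  linarith

lemma sumg_ge (hn : 1 ≤ n) (ht : 0 < t) (hκ : 0 < κ) {k : ℕ} (hk : k ≤ n) :
    (((n:ℝ) - k) - ((n:ℝ) - k)*Real.log (((n:ℝ) - k)/(t*κ)))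
      - ((n:ℝ) - (n:ℝ)*Real.log ((n:ℝ)/(t*κ)))
      ≤ ∑ i ∈ Finset.range k, Real.log (((n:ℝ) - i)/(t*κ)) := by
  have hd : 0 < t*κ := mul_pos ht hκ
  set f : ℕ → ℝ := fun i =>
    ((n:ℝ) - i) - ((n:ℝ) - i)*Real.log (((n:ℝ) - i)/(t*κ)) with hf
  have hstep : ∀ i ∈ Finset.range k, f (i+1) - f i ≤ Real.log (((n:ℝ) - i)/(t*κ)) := by
    intro i hi
    have hin : i < n := lt_of_lt_of_le (Finset.mem_range.1 hi) hk
    have hu : 1 ≤ (n:ℝ) - i := by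
      have : (i:ℝ) + 1 ≤ (n:ℝ) := by exact_mod_cast hin
      linarith
    have h := lamstep2 hd hu
    have e1 : ((i+1 : ℕ):ℝ) = (i:ℝ) + 1 := by push_cast; ring
    have e2 : (n:ℝ) - ((i:ℝ)+1) = (n:ℝ) - i - 1 := by ring
    simp only [hf, e1, e2]
    convert h using 3 <;> ring
  have htel : ∑ i ∈ Finset.range k, (f (i+1) - f i) = f k - f 0 := Finset.sum_range_sub f k
  have hsum := Finset.sum_le_sum hstep
  rw [htel] at hsum
  have hf0 : f 0 = (n:ℝ) - (n:ℝ)*Real.log ((n:ℝ)/(t*κ)) := by simp only [hf]; norm_num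
  rw [hf0] at hsum
  exact hsum

lemma Phi_le (hn : 1 ≤ n) (ht : 0 < t) (hκ : 0 < κ) {k : ℕ} (hk : k ≤ n) :
    Phi n t κ k ≤ 2*Real.log (((n:ℝ)+1)/(t*κ)) := by
  have hd : 0 < t*κ := mul_pos ht hκ
  have hu : (1:ℝ) ≤ (n:ℝ) := by exact_mod_cast hn
  have hE := lamE hd hu
  have hS := sumg_le hn ht hκ hk
  rw [Phi]
  linarith

lemma Phi_ge (hn : 1 ≤ n) (ht : 0 < t) (hκ : 0 < κ) {k : ℕ} (hk : k ≤ n) :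
    -(2*((k:ℝ) - ((n:ℝ) - t*κ))^2/(t*κ)) ≤ Phi n t κ k := by
  have hd : 0 < t*κ := mul_pos ht hκ
  have hu : (0:ℝ) ≤ (n:ℝ) - k := by
    have : (k:ℝ) ≤ (n:ℝ) := by exact_mod_cast hk
    linarith
  have hG := lam_ge hd hu
  have hS := sumg_ge hn ht hκ hk
  have hsq : ((n:ℝ) - k - t*κ)^2 = ((k:ℝ) - ((n:ℝ) - t*κ))^2 := by ring
  rw [hsq] at hG
  rw [Phi]
  have h2 : -(2*((k:ℝ) - ((n:ℝ) - t*κ))^2/(t*κ))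
      = 2*(-(((k:ℝ) - ((n:ℝ) - t*κ))^2/(t*κ))) := by ring
  linarith

lemma XX_le (hn : 1 ≤ n) (ht : 0 < t) (hκ : 0 < κ) (hid : t*κ*(1+κ) = (n:ℝ)) :
    XX n t κ ≤ (((n:ℝ)+1)/(t*κ))^2 := by
  have hd : 0 < t*κ := mul_pos ht hκ
  have hm : 0 < (n:ℝ) - t*κ := by rw [m_eq hid]; positivity
  have hterm : ∀ k ∈ Finset.range (n+1),
      (((n:ℝ) - t*κ)^k/(k ! : ℝ)) * Real.exp (Phi n t κ k)
        ≤ (((n:ℝ)+1)/(t*κ))^2 * (((n:ℝ) - t*κ)^k/(k ! : ℝ)) := by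
    intro k hk
    have hk' : k ≤ n := by have := Finset.mem_range.1 hk; omega
    have hexp : Real.exp (Phi n t κ k) ≤ (((n:ℝ)+1)/(t*κ))^2 := by
      calc Real.exp (Phi n t κ k) ≤ Real.exp (2*Real.log (((n:ℝ)+1)/(t*κ))) :=
            Real.exp_le_exp.2 (Phi_le hn ht hκ hk')
        _ = (((n:ℝ)+1)/(t*κ))^2 := by
            rw [two_mul, Real.exp_add, Real.exp_log (by positivity), sq]
    have hpos : 0 ≤ ((n:ℝ) - t*κ)^k/(k ! : ℝ) := by positivity
    calc (((n:ℝ) - t*κ)^k/(k ! : ℝ)) * Real.exp (Phi n t κ k)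
        ≤ (((n:ℝ) - t*κ)^k/(k ! : ℝ)) * (((n:ℝ)+1)/(t*κ))^2 :=
          mul_le_mul_of_nonneg_left hexp hpos
      _ = (((n:ℝ)+1)/(t*κ))^2 * (((n:ℝ) - t*κ)^k/(k ! : ℝ)) := by ring
  have hsum := Finset.sum_le_sum hterm
  rw [← Finset.mul_sum] at hsum
  have hF : ∑ k ∈ Finset.range (n+1), ((n:ℝ) - t*κ)^k/(k ! : ℝ) ≤ Real.exp ((n:ℝ) - t*κ) :=
    Real.sum_le_exp_of_nonneg hm.le _
  have hXX : XX n t κ ≤ Real.exp (-((n:ℝ) - t*κ)) *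
      ((((n:ℝ)+1)/(t*κ))^2 * Real.exp ((n:ℝ) - t*κ)) := by
    rw [XX]
    apply mul_le_mul_of_nonneg_left _ (Real.exp_pos _).le
    calc ∑ k ∈ Finset.range (n+1), (((n:ℝ) - t*κ)^k/(k ! : ℝ)) * Real.exp (Phi n t κ k)
        ≤ (((n:ℝ)+1)/(t*κ))^2 * ∑ k ∈ Finset.range (n+1), ((n:ℝ) - t*κ)^k/(k ! : ℝ) := hsum
      _ ≤ (((n:ℝ)+1)/(t*κ))^2 * Real.exp ((n:ℝ) - t*κ) := by
          apply mul_le_mul_of_nonneg_left hF (by positivity)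
  calc XX n t κ ≤ Real.exp (-((n:ℝ) - t*κ)) *
      ((((n:ℝ)+1)/(t*κ))^2 * Real.exp ((n:ℝ) - t*κ)) := hXX
    _ = (((n:ℝ)+1)/(t*κ))^2 * (Real.exp (-((n:ℝ) - t*κ)) * Real.exp ((n:ℝ) - t*κ)) := by ring
    _ = (((n:ℝ)+1)/(t*κ))^2 := by rw [← Real.exp_add]; simp

lemma XX_ge (hn : 1 ≤ n) (ht : 0 < t) (hκ : 0 < κ) (hid : t*κ*(1+κ) = (n:ℝ))
    (hκ6 : κ ≤ 1/6) :
    1 - 2*κ - 2*(1/2:ℝ)^(n+1) ≤ XX n t κ := by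
  have hd : 0 < t*κ := mul_pos ht hκ
  have hmpos : 0 < (n:ℝ) - t*κ := by rw [m_eq hid]; positivity
  set m : ℝ := (n:ℝ) - t*κ with hmdef
  have hdn : t*κ < (n:ℝ) := by linarith
  have hmκ : m = (t*κ)*κ := m_eq hid
  have hmn : m ≤ (n:ℝ)*κ := by
    rw [hmκ]
    have : t*κ ≤ (n:ℝ) := hdn.le
    nlinarith
  have hmn' : m ≤ (n:ℝ) := by
    have h1n : (1:ℝ) ≤ (n:ℝ) := by exact_mod_cast hn
    nlinarith
  -- termwise lower bound
  have hterm : ∀ k ∈ Finset.range (n+1),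
      (m^k/(k ! : ℝ)) - (2/(t*κ))*(((k:ℝ) - m)^2*(m^k/(k ! : ℝ)))
        ≤ (m^k/(k ! : ℝ)) * Real.exp (Phi n t κ k) := by
    intro k hk
    have hk' : k ≤ n := by have := Finset.mem_range.1 hk; omega
    have h1 : 1 + Phi n t κ k ≤ Real.exp (Phi n t κ k) := by
      linarith [Real.add_one_le_exp (Phi n t κ k)]
    have h2 := Phi_ge hn ht hκ hk'
    have hpos : 0 ≤ m^k/(k ! : ℝ) := by positivity
    have h3 : 1 - 2*((k:ℝ) - m)^2/(t*κ) ≤ Real.exp (Phi n t κ k) := by linarith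
    calc (m^k/(k ! : ℝ)) - (2/(t*κ))*(((k:ℝ) - m)^2*(m^k/(k ! : ℝ)))
        = (m^k/(k ! : ℝ)) * (1 - 2*((k:ℝ) - m)^2/(t*κ)) := by ring
      _ ≤ (m^k/(k ! : ℝ)) * Real.exp (Phi n t κ k) := mul_le_mul_of_nonneg_left h3 hpos
  have hsum := Finset.sum_le_sum hterm
  rw [Finset.sum_sub_distrib, ← Finset.mul_sum] at hsum
  have hvar : ∑ k ∈ Finset.range (n+1), ((k:ℝ) - m)^2*(m^k/(k ! : ℝ)) ≤ m * Real.exp m :=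
    sum_sq_le hmpos.le hn hmn'
  have hFlow : Real.exp m - 2*(m^(n+1)/((n+1)! : ℝ)) ≤ ∑ k ∈ Finset.range (n+1), m^k/(k ! : ℝ) := by
    have h2m : 2*m ≤ (n:ℝ)+1 := by
      have : (1:ℝ) ≤ (n:ℝ) := by exact_mod_cast hn
      nlinarith
    linarith [tail_le hmpos.le h2m]
  -- tail quantitative bound
  have htail : m^(n+1)/((n+1)! : ℝ) ≤ (1/2:ℝ)^(n+1) := by
    have he3 : Real.exp 1 < 3 := by
      have := Real.exp_one_lt_d9
      linarith
    have h2em : 2*Real.exp 1*m ≤ (n:ℝ)+1 := by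
      have h1n : (1:ℝ) ≤ (n:ℝ) := by exact_mod_cast hn
      have he0 : 0 < Real.exp 1 := Real.exp_pos 1
      nlinarith
    have hpow := pow_le_exp_mul_factorial (n+1)
    -- (2m)^(n+1) * (exp 1)^(n+1) ≤ (n+1)^(n+1) ≤ exp(n+1) * (n+1)!
    have hkey : (2*m)^(n+1) * (Real.exp 1)^(n+1) ≤ ((n:ℝ)+1)^(n+1) := by
      rw [← mul_pow]
      apply pow_le_pow_left₀ (by positivity)
      linarith [h2em]
    have hexbn : Real.exp ((n+1 : ℕ):ℝ) = (Real.exp 1)^(n+1) := by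
      rw [← Real.exp_nat_mul]; norm_num
    have hcast : (((n+1 : ℕ)):ℝ) = (n:ℝ)+1 := by push_cast; ring
    rw [hexbn, hcast] at hpow
    have hfac : (2*m)^(n+1) ≤ ((n+1)! : ℝ) := by
      have hepos : (0:ℝ) < (Real.exp 1)^(n+1) := by positivity
      have := le_trans hkey hpow
      exact le_of_mul_le_mul_right (by linarith [this]) hepos
    rw [div_le_iff₀ (by positivity)]
    calc m^(n+1) = (1/2:ℝ)^(n+1) * (2*m)^(n+1) := by
          rw [← mul_pow]; congr 1; ring
      _ ≤ (1/2:ℝ)^(n+1) * ((n+1)! : ℝ) := by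
          apply mul_le_mul_of_nonneg_left hfac (by positivity)
  -- combine
  have hκm : (2/(t*κ))*(m*Real.exp m) = 2*κ*Real.exp m := by
    rw [hmκ]; field_simp
  have hv2 : (2/(t*κ))*(∑ k ∈ Finset.range (n+1), ((k:ℝ) - m)^2*(m^k/(k ! : ℝ)))
      ≤ 2*κ*Real.exp m := by
    calc (2/(t*κ))*(∑ k ∈ Finset.range (n+1), ((k:ℝ) - m)^2*(m^k/(k ! : ℝ)))
        ≤ (2/(t*κ))*(m*Real.exp m) := by
          apply mul_le_mul_of_nonneg_left hvar (by positivity)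
      _ = 2*κ*Real.exp m := hκm
  have hS : Real.exp m - 2*(1/2:ℝ)^(n+1) - 2*κ*Real.exp m
      ≤ ∑ k ∈ Finset.range (n+1), (m^k/(k ! : ℝ)) * Real.exp (Phi n t κ k) := by
    have := htail
    linarith
  have hh := mul_le_mul_of_nonneg_left hS (Real.exp_pos (-m)).le
  have hexp1 : Real.exp (-m) * Real.exp m = 1 := by rw [← Real.exp_add]; simp
  have hem : Real.exp (-m) ≤ 1 := by
    rw [Real.exp_le_one_iff]
    linarith
  have hA : (0:ℝ) ≤ (1/2:ℝ)^(n+1) := by positivity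
  rw [XX, ← hmdef]
  nlinarith [hh, hexp1, hem, hA, hκ.le]


lemma final_eq (hn : 1 ≤ n) (ht : 0 < t) (hκ : 0 < κ) (hid : t*κ*(1+κ) = (n:ℝ)) :
    (t^n/(n ! : ℝ)) * ((n:ℝ)/(t*κ))^(2*n) * Real.exp (-((n:ℝ) - t*κ))
      = (Real.sqrt (2*Real.pi*(n:ℝ)))⁻¹ * ((1+1/κ)*Real.exp (1/(1+κ)))^n
        * (Real.sqrt (2*Real.pi*(n:ℝ)) * ((n:ℝ)/Real.exp 1)^n / (n ! : ℝ)) := by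
  have hd : 0 < t*κ := mul_pos ht hκ
  have hj : 0 < (n:ℝ) := by exact_mod_cast Nat.pos_of_ne_zero (by omega)
  have h1κ : 0 < 1 + κ := by linarith
  have hsqpos : 0 < Real.sqrt (2*Real.pi*(n:ℝ)) :=
    Real.sqrt_pos.2 (by positivity)
  have hfac : (0:ℝ) < (n ! : ℝ) := by positivity
  have harg : (n:ℝ)*(1/(1+κ)) = t*κ := by
    rw [← hid]; field_simp
  have hexppow : (Real.exp (1/(1+κ)))^n = Real.exp (t*κ) := by
    rw [← Real.exp_nat_mul, harg]
  have hepow : (Real.exp 1)^n = Real.exp ((n:ℝ)) := by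
    rw [← Real.exp_nat_mul, mul_one]
  have hbase : t*((n:ℝ)/(t*κ))^2 = (1+1/κ)*(n:ℝ) := by
    rw [← hid]; field_simp; ring
  have hpowkey : t^n * ((n:ℝ)/(t*κ))^(2*n) = ((1+1/κ)*(n:ℝ))^n := by
    rw [pow_mul, ← mul_pow, hbase]
  have hexpkey : Real.exp (-((n:ℝ) - t*κ)) = Real.exp (t*κ) * (Real.exp ((n:ℝ)))⁻¹ := by
    rw [← Real.exp_neg, ← Real.exp_add]; congr 1; ring
  have hR : (Real.sqrt (2*Real.pi*(n:ℝ)))⁻¹ * ((1+1/κ)*Real.exp (1/(1+κ)))^n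
        * (Real.sqrt (2*Real.pi*(n:ℝ)) * ((n:ℝ)/Real.exp 1)^n / (n ! : ℝ))
      = ((1+1/κ)^n * Real.exp (t*κ)) * ((n:ℝ)^n * (Real.exp ((n:ℝ)))⁻¹)/(n ! : ℝ) := by
    rw [mul_pow, hexppow, div_pow, hepow]
    field_simp
  rw [hR]
  calc (t^n/(n ! : ℝ)) * ((n:ℝ)/(t*κ))^(2*n) * Real.exp (-((n:ℝ) - t*κ))
      = (t^n * ((n:ℝ)/(t*κ))^(2*n)) * Real.exp (-((n:ℝ) - t*κ)) / (n ! : ℝ) := by ring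
    _ = ((1+1/κ)*(n:ℝ))^n * (Real.exp (t*κ) * (Real.exp ((n:ℝ)))⁻¹) / (n ! : ℝ) := by
        rw [hpowkey, hexpkey]
    _ = ((1+1/κ)^n * Real.exp (t*κ)) * ((n:ℝ)^n * (Real.exp ((n:ℝ)))⁻¹)/(n ! : ℝ) := by
        rw [mul_pow]; ring

end Core

end LagAux

/-- Perron-type asymptotics for the Laguerre polynomials `L_j(-t_j) = Σ C(j,i) t_j^i/i!`
in the regime `j → ∞`, `j = o(t_j)`. -/
theorem laguerre_asymptotics_sublinear
    (t : ℕ → ℝ) (htpos : ∀ j, 0 < t j) (ht : Tendsto t atTop atTop)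
    (hjo : (fun j : ℕ => (j : ℝ)) =o[atTop] t)
    (κ : ℕ → ℝ)
    (hκ : ∀ j : ℕ, κ j = (Real.sqrt (1 + 4 * (j : ℝ) / t j) - 1) / 2)
    (G : ℝ → ℝ)
    (hG : ∀ z : ℝ, G z = (1 + 1 / z) * Real.exp (1 / (1 + z))) :
    (fun j : ℕ => ∑ i ∈ Finset.range (j + 1),
        (j.choose i : ℝ) * t j ^ i / (Nat.factorial i : ℝ))
      ~[atTop] (fun j : ℕ => (Real.sqrt (2 * Real.pi * (j : ℝ)))⁻¹ * (G (κ j)) ^ j) := by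
  have hid : ∀ j : ℕ, t j * κ j * (1 + κ j) = (j:ℝ) := by
    intro j
    have ht' := htpos j
    have hx : (0:ℝ) ≤ 1 + 4 * (j:ℝ) / t j := by positivity
    have hs : Real.sqrt (1 + 4 * (j:ℝ) / t j) ^ 2 = 1 + 4 * (j:ℝ) / t j := Real.sq_sqrt hx
    have key : κ j * (1 + κ j) = (j:ℝ)/t j := by
      rw [hκ j]
      linear_combination hs/4
    calc t j * κ j * (1 + κ j) = t j * (κ j * (1 + κ j)) := by ring
      _ = t j * ((j:ℝ)/t j) := by rw [key]
      _ = (j:ℝ) := by field_simp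
  have hjt : Tendsto (fun j : ℕ => (j:ℝ)/t j) atTop (𝓝 0) :=
    (Asymptotics.isLittleO_iff_tendsto (fun j h => absurd h (htpos j).ne')).1 hjo
  have hκ0 : Tendsto κ atTop (𝓝 0) := by
    have h1 : Tendsto (fun j : ℕ => 1 + 4 * (j:ℝ) / t j) atTop (𝓝 (1 + 4*0)) := by
      apply Tendsto.add tendsto_const_nhds
      have hfun : (fun j : ℕ => 4 * (j:ℝ) / t j) = fun j : ℕ => 4 * ((j:ℝ)/t j) := by
        funext j; ring
      rw [hfun]
      exact hjt.const_mul 4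
    norm_num at h1
    have hsq : Tendsto (fun j : ℕ => Real.sqrt (1 + 4 * (j:ℝ) / t j)) atTop (𝓝 1) := by
      have := (Real.continuous_sqrt.tendsto 1).comp h1
      rw [Real.sqrt_one] at this; exact this
    have h2 : Tendsto (fun j : ℕ => (Real.sqrt (1 + 4 * (j:ℝ) / t j) - 1)/2) atTop (𝓝 0) := by
      have := (hsq.sub (tendsto_const_nhds (x := (1:ℝ)))).div_const 2
      simpa using this
    exact h2.congr (fun j => (hκ j).symm)
  have hκpos : ∀ j : ℕ, 1 ≤ j → 0 < κ j := by
    intro j hj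
    rw [hκ j]
    have hj0 : (0:ℝ) < (j:ℝ) := by exact_mod_cast hj
    have ht' := htpos j
    have hx : (0:ℝ) < 4 * (j:ℝ) / t j := by positivity
    have h1 : (1:ℝ) < Real.sqrt (1 + 4 * (j:ℝ) / t j) := by
      have h2 : Real.sqrt 1 < Real.sqrt (1 + 4 * (j:ℝ) / t j) :=
        Real.sqrt_lt_sqrt (by norm_num) (by linarith)
      simpa using h2
    linarith
  -- Stirling factor tends to 1
  have hpi0 : Real.sqrt Real.pi ≠ 0 := (Real.sqrt_pos.2 Real.pi_pos).ne'
  have hstf : Tendsto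
      (fun j : ℕ => Real.sqrt (2*Real.pi*(j:ℝ)) * ((j:ℝ)/Real.exp 1)^j / (j ! : ℝ))
      atTop (𝓝 1) := by
    have h2 : Tendsto (fun j : ℕ => Real.sqrt Real.pi / Stirling.stirlingSeq j) atTop
        (𝓝 (Real.sqrt Real.pi / Real.sqrt Real.pi)) :=
      tendsto_const_nhds.div Stirling.tendsto_stirlingSeq_sqrt_pi hpi0
    rw [div_self hpi0] at h2
    apply h2.congr'
    filter_upwards [eventually_ge_atTop 1] with j hj
    have hj0 : (0:ℝ) < (j:ℝ) := by exact_mod_cast hj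
    rw [Stirling.stirlingSeq]
    have hsplit : Real.sqrt (2*Real.pi*(j:ℝ)) = Real.sqrt Real.pi * Real.sqrt (2*(j:ℝ)) := by
      rw [← Real.sqrt_mul Real.pi_pos.le]
      congr 1; ring
    rw [hsplit, div_div_eq_mul_div]
    ring
  -- squeeze for XX
  have hev6 : ∀ᶠ j : ℕ in atTop, κ j < 1/6 := hκ0.eventually_lt_const (by norm_num)
  have hXup : ∀ᶠ j : ℕ in atTop,
      LagAux.XX j (t j) (κ j) ≤ (((j:ℝ)+1)/(t j*κ j))^2 := by
    filter_upwards [eventually_ge_atTop 1] with j hj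
    exact LagAux.XX_le hj (htpos j) (hκpos j hj) (hid j)
  have hXlow : ∀ᶠ j : ℕ in atTop,
      1 - 2*κ j - 2*(1/2:ℝ)^(j+1) ≤ LagAux.XX j (t j) (κ j) := by
    filter_upwards [eventually_ge_atTop 1, hev6] with j hj h6
    exact LagAux.XX_ge hj (htpos j) (hκpos j hj) (hid j) h6.le
  have hhi : Tendsto (fun j : ℕ => (((j:ℝ)+1)/(t j*κ j))^2) atTop (𝓝 1) := by
    have hbase : Tendsto (fun j : ℕ => (1+1/(j:ℝ))*(1+κ j)) atTop (𝓝 ((1+0)*(1+0))) :=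
      (tendsto_const_nhds.add tendsto_one_div_atTop_nhds_zero_nat).mul
        (tendsto_const_nhds.add hκ0)
    norm_num at hbase
    have hpow : Tendsto (fun j : ℕ => ((1+1/(j:ℝ))*(1+κ j))^2) atTop (𝓝 1) := by
      have := hbase.pow 2
      simpa using this
    apply hpow.congr'
    filter_upwards [eventually_ge_atTop 1] with j hj
    have hj0 : (0:ℝ) < (j:ℝ) := by exact_mod_cast hj
    have hκp := hκpos j hj
    have h1κ : (0:ℝ) < 1 + κ j := by linarith
    have hd : (0:ℝ) < t j * κ j := mul_pos (htpos j) hκp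
    have e1 : ((j:ℝ)+1)/(t j*κ j) = (((j:ℝ)+1)*(1+κ j))/(t j*κ j*(1+κ j)) :=
      (mul_div_mul_right _ _ h1κ.ne').symm
    have e2 : ((j:ℝ)+1)/(t j*κ j) = (1+1/(j:ℝ))*(1+κ j) := by
      rw [e1, hid j]
      field_simp
    rw [e2]
  have hlo : Tendsto (fun j : ℕ => 1 - 2*κ j - 2*(1/2:ℝ)^(j+1)) atTop (𝓝 1) := by
    have hgeo : Tendsto (fun j : ℕ => (1/2:ℝ)^j) atTop (𝓝 0) :=
      tendsto_pow_atTop_nhds_zero_of_lt_one (by norm_num) (by norm_num)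
    have hgeo1 : Tendsto (fun j : ℕ => (1/2:ℝ)^(j+1)) atTop (𝓝 0) := by
      have := hgeo.mul_const (1/2:ℝ)
      simpa [pow_succ] using this
    have hcomb := ((tendsto_const_nhds (x := (1:ℝ))).sub (hκ0.const_mul 2)).sub
      (hgeo1.const_mul 2)
    simpa using hcomb
  have hX1 : Tendsto (fun j : ℕ => LagAux.XX j (t j) (κ j)) atTop (𝓝 1) :=
    tendsto_of_tendsto_of_tendsto_of_le_of_le' hlo hhi hXlow hXup
  -- conclusion
  have hne : ∀ᶠ j : ℕ in atTop,
      (Real.sqrt (2*Real.pi*(j:ℝ)))⁻¹ * (G (κ j))^j ≠ 0 := by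
    filter_upwards [eventually_ge_atTop 1] with j hj
    have hj0 : (0:ℝ) < (j:ℝ) := by exact_mod_cast hj
    have hκp := hκpos j hj
    have hκinv : (0:ℝ) < 1 + 1/κ j := by positivity
    have hGpos : 0 < G (κ j) := by
      rw [hG]
      exact mul_pos hκinv (Real.exp_pos _)
    have hSpos : (0:ℝ) < Real.sqrt (2*Real.pi*(j:ℝ)) := Real.sqrt_pos.2 (by positivity)
    exact mul_ne_zero (inv_ne_zero hSpos.ne') (pow_ne_zero _ hGpos.ne')
  rw [Asymptotics.isEquivalent_iff_tendsto_one hne]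
  have hmulX : Tendsto (fun j : ℕ =>
      (Real.sqrt (2*Real.pi*(j:ℝ)) * ((j:ℝ)/Real.exp 1)^j / (j ! : ℝ)) *
        LagAux.XX j (t j) (κ j)) atTop (𝓝 1) := by
    have := hstf.mul hX1
    simpa using this
  apply Filter.Tendsto.congr' _ hmulX
  filter_upwards [eventually_ge_atTop 1] with j hj
  have hκp := hκpos j hj
  have ht' := htpos j
  have hidj := hid j
  have hj0 : (0:ℝ) < (j:ℝ) := by exact_mod_cast hj
  have hnum := LagAux.sum_eq hj ht' hκp hidj
  have hkey := LagAux.final_eq hj ht' hκp hidj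
  simp only [Pi.div_apply]
  rw [hnum, hkey, hG (κ j)]
  have hκinv : (0:ℝ) < 1 + 1/κ j := by positivity
  have hP : (0:ℝ) < ((1+1/κ j)*Real.exp (1/(1+κ j)))^j :=
    pow_pos (mul_pos hκinv (Real.exp_pos _)) j
  have hSpos : (0:ℝ) < Real.sqrt (2*Real.pi*(j:ℝ)) := Real.sqrt_pos.2 (by positivity)
  have hfac : (0:ℝ) < (j ! : ℝ) := by positivity
  field_simp
end
end

section
/- Let (s_j) be a sequence of positive reals with s_j → ∞ such that s_j = o(e^{γ j}) as j→∞ for every γ>0. Then, as j→∞, ∫_0^{s_j} y^{j−1} e^{y} dy ~ s_j^{j} e^{s_j} / (s_j + j). Equivalently, for V(x)=e^{ax}−1 (a>0) and t_j = s_j/a, V^{*(j)}(t_j) = (1/(j−1)!)∫_0^{a t_j} y^{j−1} e^y dy ~ ((a t_j)^{j−1}/(j−1)!) e^{a t_j} · a t_j/(a t_j + j). -/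
open MeasureTheory Filter Set Asymptotics
open scoped Topology ENNReal

noncomputable section

/-- `convPow μ j` is the `j`-fold convolution power of the measure `μ` on `ℝ`
(with `convPow μ 0` the Dirac mass at `0`). -/
def convPow (μ : Measure ℝ) : ℕ → Measure ℝ
  | 0 => Measure.dirac 0
  | n + 1 => ((convPow μ n).prod μ).map fun p => p.1 + p.2

namespace IGTAux


-- FTC identity: ∫_0^s ((k+1) y^k + y^(k+1)) e^y dy = s^(k+1) e^s
lemma ftc_key (k : ℕ) (s : ℝ) (hs : 0 ≤ s) :
    ∫ y in (0:ℝ)..s, (((k:ℝ)+1) * y ^ k + y ^ (k+1)) * Real.exp y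
      = s ^ (k+1) * Real.exp s := by
  have h : ∀ y ∈ Set.uIcc (0:ℝ) s, HasDerivAt (fun y : ℝ => y ^ (k+1) * Real.exp y)
      ((((k:ℝ)+1) * y ^ k + y ^ (k+1)) * Real.exp y) y := by
    intro y _
    have h1 : HasDerivAt (fun y : ℝ => y ^ (k+1)) (((k:ℝ)+1) * y ^ k) y := by
      simpa using (hasDerivAt_pow (k+1) y)
    have := h1.fun_mul (Real.hasDerivAt_exp y)
    exact this.congr_deriv (by ring)
  have hc : IntervalIntegrable
      (fun y : ℝ => (((k:ℝ)+1) * y ^ k + y ^ (k+1)) * Real.exp y) volume 0 s :=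
    (Continuous.intervalIntegrable (by continuity) _ _)
  have := intervalIntegral.integral_eq_sub_of_hasDerivAt h hc
  simpa using this

-- ∫_0^s u e^{-λ u} du ≤ 1/λ²
lemma int_ue_bound (lam s : ℝ) (hl : 0 < lam) (hs : 0 ≤ s) :
    ∫ u in (0:ℝ)..s, u * Real.exp (-(lam * u)) ≤ 1 / lam ^ 2 := by
  have h : ∀ u ∈ Set.uIcc (0:ℝ) s, HasDerivAt
      (fun u : ℝ => -((u / lam + 1 / lam ^ 2) * Real.exp (-(lam * u))))
      (u * Real.exp (-(lam * u))) u := by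
    intro u _
    have h1 : HasDerivAt (fun u : ℝ => u / lam + 1 / lam ^ 2) (1 / lam) u := by
      have := ((hasDerivAt_id u).div_const lam).add_const (1 / lam ^ 2)
      simp only [div_eq_mul_inv, one_mul] at this ⊢
      exact this
    have h2 : HasDerivAt (fun u : ℝ => Real.exp (-(lam * u)))
        (Real.exp (-(lam * u)) * (-lam)) u := by
      have : HasDerivAt (fun u : ℝ => -(lam * u)) (-lam) u := by
        simpa using ((hasDerivAt_id u).const_mul lam).fun_neg
      exact (Real.hasDerivAt_exp _).comp u this
    have := (h1.fun_mul h2).fun_neg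
    exact this.congr_deriv (by field_simp; ring)
  have hc : IntervalIntegrable (fun u : ℝ => u * Real.exp (-(lam * u))) volume 0 s :=
    (Continuous.intervalIntegrable (by continuity) _ _)
  rw [intervalIntegral.integral_eq_sub_of_hasDerivAt h hc]
  have e1 : Real.exp (-(lam * 0)) = 1 := by norm_num
  have hpos : 0 ≤ (s / lam + 1 / lam ^ 2) * Real.exp (-(lam * s)) := by
    have : 0 ≤ s / lam + 1 / lam ^ 2 := by positivity
    positivity
  rw [e1]
  rw [zero_div]
  nlinarith [hpos]

lemma key_bounds (k : ℕ) (s : ℝ) (hs : 0 < s) :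
    s ^ (k+1) * Real.exp s ≤ (s + ((k:ℝ)+1)) * (∫ y in (0:ℝ)..s, y ^ k * Real.exp y) ∧
    (s + ((k:ℝ)+1)) * (∫ y in (0:ℝ)..s, y ^ k * Real.exp y)
      ≤ s ^ (k+1) * Real.exp s + s ^ k * Real.exp s := by
  set A := ∫ y in (0:ℝ)..s, y ^ k * Real.exp y with hA
  set B := ∫ y in (0:ℝ)..s, y ^ (k+1) * Real.exp y with hB
  have hsum : ((k:ℝ)+1) * A + B = s ^ (k+1) * Real.exp s := by
    rw [← ftc_key k s hs.le]
    rw [hA, hB, ← intervalIntegral.integral_const_mul, ← intervalIntegral.integral_add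
      ((Continuous.intervalIntegrable (by continuity) _ _))
      ((Continuous.intervalIntegrable (by continuity) _ _))]
    congr 1; ext y; ring
  set G := ∫ y in (0:ℝ)..s, (s - y) * (y ^ k * Real.exp y) with hGdef
  have hG : G = s * A - B := by
    rw [hGdef, hA, hB, ← intervalIntegral.integral_const_mul,
      ← intervalIntegral.integral_sub
      ((Continuous.intervalIntegrable (by continuity) _ _))
      ((Continuous.intervalIntegrable (by continuity) _ _))]
    congr 1; ext y; ring
  have hG0 : 0 ≤ G := by
    apply intervalIntegral.integral_nonneg hs.le
    intro y hy
    have h1 : 0 ≤ s - y := by linarith [hy.2]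
    have h2 : 0 ≤ y ^ k := pow_nonneg hy.1 k
    positivity
  have hGle : G ≤ s ^ k * Real.exp s := by
    have hmono : G ≤ ∫ y in (0:ℝ)..s,
        s ^ k * Real.exp s * ((s - y) * Real.exp (-(1 * (s - y)))) := by
      rw [hGdef]
      apply intervalIntegral.integral_mono_on hs.le
        ((Continuous.intervalIntegrable (by continuity) _ _))
        ((Continuous.intervalIntegrable (by continuity) _ _))
      intro y hy
      have h1 : 0 ≤ s - y := by linarith [hy.2]
      have h2 : y ^ k ≤ s ^ k := pow_le_pow_left₀ hy.1 hy.2 k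
      have h3 : Real.exp y = Real.exp s * Real.exp (-(1 * (s - y))) := by
        rw [← Real.exp_add]; ring_nf
      rw [h3]
      have h4 : 0 ≤ Real.exp (-(1*(s - y))) := (Real.exp_pos _).le
      calc (s - y) * (y ^ k * (Real.exp s * Real.exp (-(1 * (s - y)))))
          ≤ (s - y) * (s ^ k * (Real.exp s * Real.exp (-(1 * (s - y))))) := by
            apply mul_le_mul_of_nonneg_left _ h1
            apply mul_le_mul_of_nonneg_right h2
            positivity
        _ = s ^ k * Real.exp s * ((s - y) * Real.exp (-(1 * (s - y)))) := by ring
    have hsub : (∫ y in (0:ℝ)..s, (s - y) * Real.exp (-(1 * (s - y))))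
        = ∫ u in (0:ℝ)..s, u * Real.exp (-(1 * u)) := by
      have := intervalIntegral.integral_comp_sub_left
        (fun u : ℝ => u * Real.exp (-(1 * u))) s (a := 0) (b := s)
      simpa using this
    have hb := int_ue_bound 1 s one_pos hs.le
    have : (∫ y in (0:ℝ)..s, s ^ k * Real.exp s * ((s - y) * Real.exp (-(1 * (s - y)))))
        = s ^ k * Real.exp s * ∫ u in (0:ℝ)..s, u * Real.exp (-(1 * u)) := by
      rw [intervalIntegral.integral_const_mul, hsub]
    rw [this] at hmono
    have hpos : (0:ℝ) ≤ s ^ k * Real.exp s := by positivity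
    calc G ≤ s ^ k * Real.exp s * ∫ u in (0:ℝ)..s, u * Real.exp (-(1 * u)) := hmono
      _ ≤ s ^ k * Real.exp s * (1 / 1 ^ 2) := mul_le_mul_of_nonneg_left hb hpos
      _ = s ^ k * Real.exp s := by norm_num
  constructor
  · nlinarith [hsum, hG, hG0]
  · nlinarith [hsum, hG, hGle]

lemma part1 (s : ℕ → ℝ) (hspos : ∀ j, 0 < s j) (hs : Tendsto s atTop atTop) :
    (fun j : ℕ => ∫ y in (0:ℝ)..(s j), y ^ (j-1) * Real.exp y) ~[atTop]
      fun j : ℕ => s j ^ j * Real.exp (s j) / (s j + (j:ℝ)) := by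
  have hne : ∀ᶠ j : ℕ in atTop, (s j ^ j * Real.exp (s j) / (s j + (j:ℝ))) ≠ 0 := by
    filter_upwards with j
    have h1 := hspos j
    have h2 : (0:ℝ) ≤ j := Nat.cast_nonneg j
    positivity
  rw [Asymptotics.isEquivalent_iff_tendsto_one hne]
  have hb : ∀ᶠ j : ℕ in atTop,
      1 ≤ (∫ y in (0:ℝ)..(s j), y ^ (j-1) * Real.exp y) /
            (s j ^ j * Real.exp (s j) / (s j + (j:ℝ))) ∧
      (∫ y in (0:ℝ)..(s j), y ^ (j-1) * Real.exp y) /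
            (s j ^ j * Real.exp (s j) / (s j + (j:ℝ))) ≤ 1 + 1 / s j := by
    filter_upwards [eventually_ge_atTop 1] with j hj
    obtain ⟨k, rfl⟩ : ∃ k, j = k + 1 := ⟨j - 1, by omega⟩
    have hsp := hspos (k+1)
    set σ := s (k+1) with hσ
    have hk1 : (k + 1) - 1 = k := by omega
    rw [hk1]
    have hcast : ((k+1:ℕ):ℝ) = (k:ℝ) + 1 := by push_cast; ring
    rw [hcast]
    have hkb := key_bounds k σ hsp
    set A := ∫ y in (0:ℝ)..σ, y ^ k * Real.exp y with hA
    have hden : (0:ℝ) < σ + ((k:ℝ)+1) := by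
      have : (0:ℝ) ≤ (k:ℝ) := Nat.cast_nonneg k
      linarith
    have hXpos : (0:ℝ) < σ ^ (k+1) * Real.exp σ := by positivity
    have hgpos : (0:ℝ) < σ ^ (k+1) * Real.exp σ / (σ + ((k:ℝ)+1)) := by positivity
    constructor
    · rw [one_le_div hgpos, div_le_iff₀ hden]
      linarith [hkb.1]
    · rw [div_le_iff₀ hgpos]
      rw [← mul_div_assoc, le_div_iff₀ hden]
      have hXs : σ ^ (k+1) * Real.exp σ / σ = σ ^ k * Real.exp σ := by
        rw [pow_succ]; field_simp
      have : (1 + 1 / σ) * (σ ^ (k+1) * Real.exp σ)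
          = σ ^ (k+1) * Real.exp σ + σ ^ k * Real.exp σ := by
        rw [add_mul, one_mul, one_div, ← div_eq_inv_mul, hXs]
      rw [mul_comm A (σ + ((k:ℝ)+1)), this]
      exact hkb.2
  have hupper : Tendsto (fun j : ℕ => 1 + 1 / s j) atTop (𝓝 1) := by
    have h0 : Tendsto (fun j : ℕ => 1 / s j) atTop (𝓝 0) := by
      simpa only [one_div] using (show Tendsto (fun j => (s j)⁻¹) atTop (𝓝 0) from hs.inv_tendsto_atTop)
    simpa using tendsto_const_nhds.add h0
  apply tendsto_of_tendsto_of_tendsto_of_le_of_le' tendsto_const_nhds hupper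
  · filter_upwards [hb] with j h using h.1
  · filter_upwards [hb] with j h using h.2


lemma conv_withDensity (f g : ℝ → ℝ≥0∞) (hf : Measurable f) (hg : Measurable g) :
    (((volume : Measure ℝ).withDensity f).prod ((volume : Measure ℝ).withDensity g)).map
        (fun p : ℝ × ℝ => p.1 + p.2)
      = (volume : Measure ℝ).withDensity (fun x => ∫⁻ u, f u * g (x - u)) := by
  have hconv_meas : Measurable (fun x : ℝ => ∫⁻ u, f u * g (x - u)) := by
    apply Measurable.lintegral_prod_right (f := fun x u => f u * g (x - u))
    exact (hf.comp measurable_snd).mul (hg.comp (measurable_fst.sub measurable_snd))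
  have hadd : Measurable (fun p : ℝ × ℝ => p.1 + p.2) := measurable_fst.add measurable_snd
  ext S hS
  rw [Measure.map_apply hadd hS, Measure.prod_apply (hadd hS),
    withDensity_apply _ hS]
  have hinner : ∀ x : ℝ, ((volume : Measure ℝ).withDensity g)
        (Prod.mk x ⁻¹' ((fun p : ℝ × ℝ => p.1 + p.2) ⁻¹' S))
      = ∫⁻ y, g y * S.indicator 1 (x + y) := by
    intro x
    have hpre : MeasurableSet {y : ℝ | x + y ∈ S} := (measurable_const_add x) hS
    have : (Prod.mk x ⁻¹' ((fun p : ℝ × ℝ => p.1 + p.2) ⁻¹' S)) = {y : ℝ | x + y ∈ S} := rfl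
    rw [this, withDensity_apply _ hpre, ← lintegral_indicator hpre]
    congr 1; ext y
    by_cases h : x + y ∈ S <;> simp [indicator, h]
  simp_rw [hinner]
  have hmeasF : Measurable (fun x : ℝ => ∫⁻ y, g y * S.indicator 1 (x + y)) := by
    apply Measurable.lintegral_prod_right (f := fun x y => g y * S.indicator 1 (x + y))
    exact (hg.comp measurable_snd).mul
      ((measurable_one.indicator hS).comp (measurable_fst.add measurable_snd))
  rw [lintegral_withDensity_eq_lintegral_mul _ hf hmeasF]
  have htrans : ∀ x : ℝ, (∫⁻ y, g y * S.indicator 1 (x + y))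
      = ∫⁻ z, g (z - x) * S.indicator 1 z := by
    intro x
    rw [← lintegral_add_left_eq_self (fun z => g (z - x) * S.indicator 1 z) x]
    simp
  simp_rw [Pi.mul_apply, htrans]
  calc ∫⁻ x, f x * ∫⁻ z, g (z - x) * S.indicator 1 z
      = ∫⁻ x, ∫⁻ z, f x * (g (z - x) * S.indicator 1 z) := by
        congr 1; ext x
        refine (lintegral_const_mul _ ?_).symm
        exact Measurable.mul (hg.comp (measurable_sub_const x)) (measurable_one.indicator hS)
    _ = ∫⁻ z, ∫⁻ x, f x * (g (z - x) * S.indicator 1 z) := by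
        apply lintegral_lintegral_swap
        apply Measurable.aemeasurable
        apply Measurable.mul
        · exact hf.comp measurable_fst
        · exact Measurable.mul (hg.comp (measurable_snd.sub measurable_fst))
            ((measurable_one.indicator hS).comp measurable_snd)
    _ = ∫⁻ z, (∫⁻ x, f x * g (z - x)) * S.indicator 1 z := by
        congr 1; ext z
        rw [show (fun x => f x * (g (z - x) * S.indicator 1 z))
            = fun x => (f x * g (z - x)) * S.indicator 1 z from by ext x; ring]
        refine lintegral_mul_const _ ?_
        exact hf.mul (hg.comp (measurable_const.sub measurable_id))
    _ = ∫⁻ z, S.indicator (fun z => ∫⁻ x, f x * g (z - x)) z := by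
        congr 1; ext z
        by_cases h : z ∈ S <;> simp [indicator, h]
    _ = ∫⁻ z in S, ∫⁻ x, f x * g (z - x) := (lintegral_indicator hS _)

lemma lint_exp (a : ℝ) (ha : 0 ≤ a) (c b : ℝ) (h : c ≤ b) :
    ∫⁻ x in Ioc c b, ENNReal.ofReal (a * Real.exp (a * x))
      = ENNReal.ofReal (Real.exp (a * b) - Real.exp (a * c)) := by
  rw [← ofReal_integral_eq_lintegral_ofReal]
  · congr 1
    rw [← intervalIntegral.integral_of_le h]
    have hd : ∀ x ∈ Set.uIcc c b, HasDerivAt (fun x => Real.exp (a * x))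
        (a * Real.exp (a * x)) x := by
      intro x _
      have h1 : HasDerivAt (fun x : ℝ => a * x) a x := by
        simpa using (hasDerivAt_id x).const_mul a
      have := (Real.hasDerivAt_exp (a * x)).comp x h1
      simpa [mul_comm, Function.comp_def] using this
    rw [intervalIntegral.integral_eq_sub_of_hasDerivAt hd
      (Continuous.intervalIntegrable (by continuity) _ _)]
  · exact (Continuous.integrableOn_Ioc (by continuity))
  · filter_upwards with x
    positivity

lemma Vmeasure_density (a : ℝ) (ha : 0 < a) (V : StieltjesFunction ℝ)
    (hV : ∀ x, V x = if 0 ≤ x then Real.exp (a * x) - 1 else 0) :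
    V.measure = (volume : Measure ℝ).withDensity
      ((Ici (0:ℝ)).indicator fun x => ENNReal.ofReal (a * Real.exp (a * x))) := by
  refine (Measure.ext_of_Ioc' V.measure _ (fun c b hcb => ?_) (fun c b hcb => ?_)).symm.symm
  · rw [StieltjesFunction.measure_Ioc]; exact ENNReal.ofReal_ne_top
  rw [StieltjesFunction.measure_Ioc,
    withDensity_apply _ measurableSet_Ioc, lintegral_indicator measurableSet_Ici,
    Measure.restrict_restrict measurableSet_Ici]
  rw [hV b, hV c]
  rcases le_or_gt 0 c with h0c | hc0
  · have hseteq : Ici (0:ℝ) ∩ Ioc c b = Ioc c b := by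
      apply inter_eq_self_of_subset_right
      intro x hx
      exact le_trans h0c (le_of_lt hx.1)
    rw [hseteq, if_pos (le_trans h0c hcb.le), if_pos h0c, lint_exp a ha.le c b hcb.le]
    congr 1
    ring
  rcases le_or_gt 0 b with h0b | hb0
  · have hseteq : Ici (0:ℝ) ∩ Ioc c b = Icc 0 b := by
      ext x
      constructor
      · rintro ⟨h1, h2⟩; exact ⟨h1, h2.2⟩
      · rintro ⟨h1, h2⟩; exact ⟨h1, lt_of_lt_of_le hc0 h1, h2⟩
    rw [hseteq, ← Measure.restrict_congr_set Ioc_ae_eq_Icc, lint_exp a ha.le 0 b h0b,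
      if_pos h0b, if_neg (not_le.mpr hc0)]
    congr 1
    rw [mul_zero, Real.exp_zero]
    ring
  · have hseteq : Ici (0:ℝ) ∩ Ioc c b = ∅ := by
      apply eq_empty_of_forall_notMem
      rintro x ⟨hx1, hx2⟩
      exact absurd (le_trans hx1 hx2.2) (not_le.mpr hb0)
    have hc0 : ¬ (0:ℝ) ≤ c := by
      push_neg
      linarith
    rw [hseteq, if_neg (not_le.mpr hb0), if_neg hc0]
    simp

def dens (a : ℝ) (n : ℕ) : ℝ → ℝ≥0∞ :=
  (Ici (0:ℝ)).indicator fun x =>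
    ENNReal.ofReal (a ^ (n+1) * x ^ n / (n.factorial : ℝ) * Real.exp (a * x))

lemma dens_meas (a : ℝ) (n : ℕ) : Measurable (dens a n) := by
  apply Measurable.indicator _ measurableSet_Ici
  exact ENNReal.measurable_ofReal.comp (by continuity : Continuous fun x : ℝ =>
    a ^ (n+1) * x ^ n / (n.factorial : ℝ) * Real.exp (a * x)).measurable

lemma dens_conv (a : ℝ) (ha : 0 < a) (n : ℕ) (x : ℝ) :
    ∫⁻ u, dens a n u * dens a 0 (x - u) = dens a (n+1) x := by
  rcases lt_or_ge x 0 with hx | hx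
  · have hzero : ∀ u : ℝ, dens a n u * dens a 0 (x - u) = 0 := by
      intro u
      rcases lt_or_ge u 0 with hu | hu
      · rw [show dens a n u = 0 from indicator_of_notMem (notMem_Ici.mpr hu) _, zero_mul]
      · have : x - u < 0 := by linarith
        rw [show dens a 0 (x - u) = 0 from indicator_of_notMem (notMem_Ici.mpr this) _,
          mul_zero]
    simp_rw [hzero]
    rw [lintegral_zero, show dens a (n+1) x = 0 from
      indicator_of_notMem (notMem_Ici.mpr hx) _]
  · have hinteq : ∀ u : ℝ, dens a n u * dens a 0 (x - u)
        = (Icc 0 x).indicator (fun u =>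
            ENNReal.ofReal ((a ^ (n+2) / (n.factorial : ℝ) * Real.exp (a * x)) * u ^ n)) u := by
      intro u
      rcases lt_or_ge u 0 with hu | hu
      · rw [show dens a n u = 0 from indicator_of_notMem (notMem_Ici.mpr hu) _, zero_mul,
          indicator_of_notMem (fun h => absurd h.1 (not_le.mpr hu)) _]
      rcases le_or_gt u x with hux | hux
      · rw [indicator_of_mem (show u ∈ Icc 0 x from ⟨hu, hux⟩) (fun u => ENNReal.ofReal (a ^ (n+2) / (n.factorial : ℝ) * Real.exp (a * x) * u ^ n))]
        rw [show dens a n u = ENNReal.ofReal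
            (a ^ (n+1) * u ^ n / (n.factorial : ℝ) * Real.exp (a * u)) from
          indicator_of_mem hu _]
        rw [show dens a 0 (x - u) = ENNReal.ofReal
            (a ^ (0+1) * (x-u) ^ 0 / ((0:ℕ).factorial : ℝ) * Real.exp (a * (x-u))) from
          indicator_of_mem (by simp [mem_Ici]; linarith) _]
        rw [← ENNReal.ofReal_mul (by positivity)]
        congr 1
        have he : Real.exp (a*u) * Real.exp (a*(x-u)) = Real.exp (a*x) := by
          rw [← Real.exp_add]
          congr 1
          ring
        rw [← he]
        simp [Nat.factorial_zero]
        ring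
      · rw [show dens a 0 (x - u) = 0 from
          indicator_of_notMem (notMem_Ici.mpr (by linarith)) _, mul_zero,
          indicator_of_notMem (fun h => absurd h.2 (not_le.mpr hux)) _]
    simp_rw [hinteq]
    rw [lintegral_indicator measurableSet_Icc]
    rw [← ofReal_integral_eq_lintegral_ofReal
      ((Continuous.integrableOn_Icc (by continuity)))
      ((ae_restrict_iff' measurableSet_Icc).mpr (ae_of_all _ fun u hu => by
        have h0u : (0:ℝ) ≤ u := hu.1
        positivity))]
    rw [show dens a (n+1) x = ENNReal.ofReal
        (a ^ (n+2) * x ^ (n+1) / ((n+1).factorial : ℝ) * Real.exp (a * x)) from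
      indicator_of_mem hx _]
    rw [MeasureTheory.integral_Icc_eq_integral_Ioc, ← intervalIntegral.integral_of_le hx,
      intervalIntegral.integral_const_mul, integral_pow]
    congr 1
    rw [Nat.factorial_succ]
    have hfac : ((n.factorial : ℝ)) ≠ 0 := Nat.cast_ne_zero.mpr n.factorial_ne_zero
    push_cast
    field_simp
    ring

lemma convPow_eq' (a : ℝ) (ha : 0 < a) (μ : Measure ℝ)
    (hμ : μ = (volume : Measure ℝ).withDensity (dens a 0))
    (convPow : Measure ℝ → ℕ → Measure ℝ)
    (h0 : convPow μ 0 = Measure.dirac 0)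
    (hsucc : ∀ n, convPow μ (n+1) = ((convPow μ n).prod μ).map fun p : ℝ × ℝ => p.1 + p.2)
    (n : ℕ) : convPow μ (n+1) = (volume : Measure ℝ).withDensity (dens a n) := by
  subst hμ
  induction n with
  | zero =>
    rw [hsucc 0, h0, Measure.dirac_prod, Measure.map_map (g := fun p : ℝ × ℝ => p.1 + p.2) (measurable_fst.add measurable_snd)
      measurable_prodMk_left]
    have : ((fun p : ℝ × ℝ => p.1 + p.2) ∘ Prod.mk 0) = id := by
      funext y
      simp
    rw [this, Measure.map_id]
  | succ m ih =>
    rw [hsucc (m+1), ih, conv_withDensity _ _ (dens_meas a m) (dens_meas a 0)]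
    congr 1
    funext x
    exact dens_conv a ha m x

lemma dens_apply_Icc (a : ℝ) (ha : 0 < a) (k : ℕ) (t : ℝ) (ht : 0 ≤ t) :
    (((volume : Measure ℝ).withDensity (dens a k)) (Icc 0 t)).toReal
      = (1 / (k.factorial : ℝ)) * ∫ y in (0:ℝ)..(a * t), y ^ k * Real.exp y := by
  rw [withDensity_apply _ measurableSet_Icc]
  have hcong : ∫⁻ x in Icc (0:ℝ) t, dens a k x
      = ∫⁻ x in Icc (0:ℝ) t, ENNReal.ofReal
          (a ^ (k+1) * x ^ k / (k.factorial : ℝ) * Real.exp (a * x)) := by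
    apply setLIntegral_congr_fun measurableSet_Icc
    intro x hx
    exact indicator_of_mem hx.1 _
  rw [hcong, ← ofReal_integral_eq_lintegral_ofReal
    ((Continuous.integrableOn_Icc (by continuity)))
    ((ae_restrict_iff' measurableSet_Icc).mpr (ae_of_all _ fun u hu => by
      have h0u : (0:ℝ) ≤ u := hu.1
      positivity))]
  rw [ENNReal.toReal_ofReal (by
    apply setIntegral_nonneg measurableSet_Icc
    intro u hu
    have h0u : (0:ℝ) ≤ u := hu.1
    positivity)]
  rw [MeasureTheory.integral_Icc_eq_integral_Ioc, ← intervalIntegral.integral_of_le ht]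
  have hsub : (∫ x in (0:ℝ)..t, (fun y => y ^ k * Real.exp y) (a * x))
      = a⁻¹ • ∫ y in (a*0)..(a*t), y ^ k * Real.exp y :=
    intervalIntegral.integral_comp_mul_left (fun y => y ^ k * Real.exp y) (ne_of_gt ha)
  have hrw : (fun x : ℝ => a ^ (k+1) * x ^ k / (k.factorial : ℝ) * Real.exp (a * x))
      = fun x : ℝ => (a / (k.factorial : ℝ)) * ((a * x) ^ k * Real.exp (a * x)) := by
    funext x
    rw [mul_pow]
    ring
  rw [hrw, intervalIntegral.integral_const_mul]
  rw [show (∫ x in (0:ℝ)..t, (a * x) ^ k * Real.exp (a * x))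
      = a⁻¹ • ∫ y in (a*0)..(a*t), y ^ k * Real.exp y from hsub]
  rw [mul_zero]
  have hfac : ((k.factorial : ℝ)) ≠ 0 := Nat.cast_ne_zero.mpr k.factorial_ne_zero
  rw [smul_eq_mul]
  field_simp

end IGTAux

open IGTAux

/-- For `s_j → ∞` growing subexponentially,
`∫_0^{s_j} y^{j-1} e^y dy ~ s_j^j e^{s_j}/(s_j + j)`; equivalently, for
`V(x) = e^{ax} - 1` and `t_j = s_j/a`,
`V^{*(j)}(t_j) ~ ((a t_j)^{j-1}/(j-1)!) e^{a t_j} · a t_j/(a t_j + j)`. -/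
theorem incomplete_gamma_type_asymptotics
    (s : ℕ → ℝ) (hspos : ∀ j, 0 < s j) (hs : Tendsto s atTop atTop)
    (hsub : ∀ γ > (0 : ℝ), s =o[atTop] fun j : ℕ => Real.exp (γ * (j : ℝ)))
    (a : ℝ) (ha : 0 < a)
    (V : StieltjesFunction ℝ)
    (hV : ∀ x, V x = if 0 ≤ x then Real.exp (a * x) - 1 else 0)
    (t : ℕ → ℝ) (htdef : ∀ j, t j = s j / a) :
    ((fun j : ℕ => ∫ y in (0 : ℝ)..(s j), y ^ (j - 1) * Real.exp y) ~[atTop]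
        fun j : ℕ => s j ^ j * Real.exp (s j) / (s j + (j : ℝ))) ∧
    ((fun j : ℕ => ((convPow V.measure j) (Set.Icc 0 (t j))).toReal) ~[atTop]
        fun j : ℕ => (a * t j) ^ (j - 1) / (Nat.factorial (j - 1) : ℝ) *
          Real.exp (a * t j) * (a * t j / (a * t j + (j : ℝ)))) := by
  have hpart1 := part1 s hspos hs
  refine ⟨hpart1, ?_⟩
  have hat : ∀ j, a * t j = s j := by
    intro j
    rw [htdef]
    field_simp
  have hdens0 : ((Ici (0:ℝ)).indicator fun x => ENNReal.ofReal (a * Real.exp (a * x)))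
      = dens a 0 := by
    unfold dens
    congr 1
    funext x
    norm_num
  have hμ : V.measure = (volume : Measure ℝ).withDensity (dens a 0) := by
    rw [Vmeasure_density a ha V hV, hdens0]
  have hconv : ∀ n : ℕ, convPow V.measure (n+1) = (volume : Measure ℝ).withDensity (dens a n) :=
    convPow_eq' a ha V.measure hμ convPow rfl (fun n => rfl)
  -- nonvanishing of the target
  have hne : ∀ᶠ j : ℕ in atTop, (s j ^ j * Real.exp (s j) / (s j + (j:ℝ))) ≠ 0 := by
    filter_upwards with j
    have h1 := hspos j
    have h2 : (0:ℝ) ≤ j := Nat.cast_nonneg j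
    positivity
  have hne2 : ∀ᶠ j : ℕ in atTop, ((a * t j) ^ (j - 1) / (Nat.factorial (j - 1) : ℝ) *
      Real.exp (a * t j) * (a * t j / (a * t j + (j : ℝ)))) ≠ 0 := by
    filter_upwards with j
    rw [hat j]
    have h1 := hspos j
    have h2 : (0:ℝ) ≤ j := Nat.cast_nonneg j
    have h3 : (0:ℝ) < (Nat.factorial (j-1) : ℝ) := by
      exact_mod_cast Nat.factorial_pos (j-1)
    positivity
  rw [Asymptotics.isEquivalent_iff_tendsto_one hne2]
  have h1 := (Asymptotics.isEquivalent_iff_tendsto_one hne).mp hpart1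
  apply Tendsto.congr' _ h1
  filter_upwards [eventually_ge_atTop 1] with j hj
  obtain ⟨k, rfl⟩ : ∃ k, j = k + 1 := ⟨j - 1, by omega⟩
  have hk1 : (k + 1) - 1 = k := by omega
  have hsp := hspos (k+1)
  have htpos : 0 ≤ t (k+1) := by
    rw [htdef]
    positivity
  have hfac : (0:ℝ) < ((k.factorial : ℕ) : ℝ) := by exact_mod_cast k.factorial_pos
  have hf2 : ((convPow V.measure (k+1)) (Set.Icc 0 (t (k+1)))).toReal
      = (1 / (k.factorial : ℝ)) * ∫ y in (0:ℝ)..(s (k+1)), y ^ k * Real.exp y := by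
    rw [hconv k, dens_apply_Icc a ha k (t (k+1)) htpos, hat (k+1)]
  have hg2 : ((a * t (k+1)) ^ k / (Nat.factorial k : ℝ) *
      Real.exp (a * t (k+1)) * (a * t (k+1) / (a * t (k+1) + ((k+1:ℕ) : ℝ))))
      = (1 / (k.factorial : ℝ)) * (s (k+1) ^ (k+1) * Real.exp (s (k+1)) /
          (s (k+1) + ((k+1:ℕ) : ℝ))) := by
    rw [hat (k+1)]
    have hden : (0:ℝ) < s (k+1) + ((k+1:ℕ) : ℝ) := by
      have : (0:ℝ) ≤ ((k+1:ℕ) : ℝ) := Nat.cast_nonneg _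
      linarith
    rw [pow_succ]
    field_simp
  simp only [Pi.div_apply]
  rw [hk1, hf2, hg2]
  rw [mul_div_mul_left _ _ (by positivity : (1 / (k.factorial : ℝ)) ≠ 0)]
end
end

section
/- Let μ be the Lebesgue–Stieltjes measure of a right-continuous nondecreasing V : ℝ → [0,∞) vanishing on (−∞,0), with V̂(s) = ∫_{[0,∞)} e^{-sx} dμ(x) finite on a neighborhood of a point s in the interior of 𝒟, and let λ(s) = log V̂(s). Let X be a random variable whose distribution is the exponentially tilted probability measure ν_s(dx) = e^{-sx} μ(dx) / V̂(s) on [0,∞); its mean is m_s = −λ'(s). Then E|X − m_s|³ ≤ 4( |λ'(s)|³ + |V̂'''(s)| / V̂(s) ). In particular, with κ(j), a(j), T_j as in the tilting setup, if T_j = o(a(j)) as j→∞ then L_j := j^{-1/2} E| (X'_{j,t} − t_j/j) / (λ''(κ(j)))^{1/2} |³ → 0 as j→∞, where X'_{j,t} has the tilted distribution ν_{κ(j)}. -/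
open MeasureTheory Filter Set Asymptotics
open scoped Topology ENNReal

noncomputable section

/-- Third-moment bound for the exponentially tilted measure
`ν_s(dx) = e^{-sx} μ(dx)/V̂(s)` (whose mean is `m_s = -λ'(s)`):
`E|X - m_s|³ ≤ 4(|λ'(s)|³ + |V̂'''(s)|/V̂(s))`; consequently, if `T_j = o(a(j))` then
`L_j = j^{-1/2} E|(X'_{j,t} - t_j/j)/(λ''(κ(j)))^{1/2}|³ → 0`. -/
theorem tilted_third_moment_bound
    (V : StieltjesFunction ℝ) (hV0 : ∀ x < (0 : ℝ), V x = 0)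
    (hVinf : Tendsto V atTop atTop)
    (μ : Measure ℝ) (hμ : μ = V.measure)
    (D : Set ℝ)
    (hD : D = {s : ℝ | 0 < s ∧ Integrable (fun x => Real.exp (-s * x)) μ})
    (hDne : D.Nonempty)
    (Vhat : ℝ → ℝ) (hVhat : ∀ s, Vhat s = ∫ x, Real.exp (-s * x) ∂μ)
    (lam : ℝ → ℝ) (hlam : ∀ s, lam s = Real.log (Vhat s))
    -- ν s : the exponentially tilted probability measure
    (ν : ℝ → Measure ℝ)
    (hν : ∀ s, ν s = (ENNReal.ofReal (Vhat s))⁻¹ •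
      (μ.withDensity fun x => ENNReal.ofReal (Real.exp (-s * x))))
    -- the tilting setup: t_j, κ(j), a(j), T_j and L_j
    (t : ℕ → ℝ) (htpos : ∀ j, 0 < t j)
    (κ : ℕ → ℝ)
    (hκ : ∀ᶠ j in atTop, κ j ∈ interior D ∧ -deriv lam (κ j) = t j / (j : ℝ))
    (a T L : ℕ → ℝ)
    (ha : ∀ j, a j = Real.sqrt ((j : ℝ) * iteratedDeriv 2 lam (κ j)))
    (hT : ∀ j, T j = |deriv lam (κ j)| ^ 3 / iteratedDeriv 2 lam (κ j)
        + |iteratedDeriv 3 Vhat (κ j)| / (iteratedDeriv 2 lam (κ j) * Vhat (κ j)))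
    (hL : ∀ j : ℕ, L j = ((j : ℝ) ^ ((1 : ℝ) / 2))⁻¹ *
      ∫ x, |(x - t j / (j : ℝ)) / Real.sqrt (iteratedDeriv 2 lam (κ j))| ^ 3 ∂(ν (κ j))) :
    (∀ s ∈ interior D,
        ∫ x, |x - (-deriv lam s)| ^ 3 ∂(ν s)
          ≤ 4 * (|deriv lam s| ^ 3 + |iteratedDeriv 3 Vhat s| / Vhat s)) ∧
    (T =o[atTop] a → Tendsto L atTop (𝓝 0)) := by
  -- basic facts about `μ`
  have hVbot : Tendsto (⇑V) atBot (𝓝 0) := by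
    refine Tendsto.congr' ?_ tendsto_const_nhds
    filter_upwards [eventually_lt_atBot (0:ℝ)] with x hx
    exact (hV0 x hx).symm
  have hIic : ∀ y : ℝ, y < 0 → μ (Iic y) = 0 := by
    intro y hy
    rw [hμ, V.measure_Iic hVbot, hV0 y hy, sub_zero, ENNReal.ofReal_zero]
  have hae : ∀ᵐ x ∂μ, 0 ≤ x := by
    rw [ae_iff]
    have hsub : {x : ℝ | ¬ (0:ℝ) ≤ x} = ⋃ n : ℕ, Iic (-(1:ℝ)/(n+1)) := by
      ext x
      simp only [mem_setOf_eq, not_le, mem_iUnion, mem_Iic]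
      constructor
      · intro hx
        obtain ⟨n, hn⟩ := exists_nat_gt (1 / (-x))
        have hx' : (0:ℝ) < -x := by linarith
        rw [div_lt_iff₀ hx'] at hn
        refine ⟨n, ?_⟩
        rw [neg_div, le_neg, div_le_iff₀ (by positivity : (0:ℝ) < (n:ℝ)+1)]
        nlinarith
      · rintro ⟨n, hn⟩
        have : -(1:ℝ)/((n:ℝ)+1) < 0 := by
          apply div_neg_of_neg_of_pos <;> [norm_num; positivity]
        linarith
    rw [hsub]
    exact measure_iUnion_null fun n =>
      hIic _ (by apply div_neg_of_neg_of_pos <;> [norm_num; positivity])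
  have hμne : μ ≠ 0 := by
    obtain ⟨x₀, hx₀⟩ := (hVinf.eventually_ge_atTop (V 0 + 1)).exists
    intro h0
    have h1 : μ (Ioc 0 x₀) = ENNReal.ofReal (V x₀ - V 0) := by
      rw [hμ, V.measure_Ioc]
    rw [h0] at h1
    simp only [Measure.coe_zero, Pi.zero_apply] at h1
    rw [eq_comm, ENNReal.ofReal_eq_zero] at h1
    linarith
  -- the moment integrals
  set M : ℕ → ℝ → ℝ := fun n u => ∫ x, x ^ n * Real.exp (-u * x) ∂μ with hM
  have hDint : ∀ u ∈ interior D, Integrable (fun x => Real.exp (-u * x)) μ := by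
    intro u hu
    have h := interior_subset hu
    rw [hD] at h
    exact h.2
  have hcont : ∀ (n : ℕ) (u : ℝ), Continuous (fun x : ℝ => x ^ n * Real.exp (-u * x)) := by
    intro n u
    exact (continuous_pow n).mul (Real.continuous_exp.comp (continuous_const.mul continuous_id))
  have int_mom : ∀ (n : ℕ) (u : ℝ), u ∈ interior D →
      Integrable (fun x => x ^ n * Real.exp (-u * x)) μ := by
    intro n u hu
    obtain ⟨ε, hε, hball⟩ := Metric.isOpen_iff.1 isOpen_interior u hu
    have hu₀ : u - ε/2 ∈ interior D := by
      apply hball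
      rw [Metric.mem_ball, Real.dist_eq]
      rw [abs_of_nonpos (by linarith)]
      linarith
    have h0 : Integrable (fun x => Real.exp (-(u - ε/2) * x)) μ := hDint _ hu₀
    set C : ℝ := (n.factorial : ℝ) * (2/ε)^n with hC
    refine Integrable.mono (h0.const_mul C) ((hcont n u).aestronglyMeasurable) ?_
    filter_upwards [hae] with x hx
    have hCnn : (0:ℝ) ≤ C := by positivity
    rw [Real.norm_eq_abs, Real.norm_eq_abs, abs_of_nonneg (by positivity),
      abs_of_nonneg (by positivity)]
    have hεx : (0:ℝ) ≤ ε/2*x := by positivity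
    have h1 : (ε/2*x)^n ≤ (n.factorial:ℝ) * Real.exp (ε/2*x) := by
      have h2 := Real.pow_div_factorial_le_exp (x := ε/2*x) hεx n
      rw [div_le_iff₀ (by positivity)] at h2
      linarith [h2]
    have key : x ^ n ≤ C * Real.exp (ε/2*x) := by
      calc x ^ n = (2/ε)^n * (ε/2*x)^n := by
            rw [← mul_pow]
            congr 1
            field_simp
        _ ≤ (2/ε)^n * ((n.factorial:ℝ) * Real.exp (ε/2*x)) :=
            mul_le_mul_of_nonneg_left h1 (by positivity)
        _ = C * Real.exp (ε/2*x) := by rw [hC]; ring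
    calc x^n * Real.exp (-u*x)
        ≤ (C * Real.exp (ε/2*x)) * Real.exp (-u*x) :=
          mul_le_mul_of_nonneg_right key (Real.exp_nonneg _)
      _ = C * Real.exp (-(u-ε/2)*x) := by
          rw [mul_assoc, ← Real.exp_add]
          congr 2
          ring
  -- differentiation under the integral sign
  have hMderiv : ∀ (n : ℕ) (u : ℝ), u ∈ interior D →
      HasDerivAt (M n) (-(M (n+1) u)) u := by
    intro n u hu
    obtain ⟨ε, hε, hball⟩ := Metric.isOpen_iff.1 isOpen_interior u hu
    have hu₀ : u - ε/2 ∈ interior D := by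
      apply hball
      rw [Metric.mem_ball, Real.dist_eq]
      rw [abs_of_nonpos (by linarith)]
      linarith
    have hbound : Integrable (fun x => x^(n+1) * Real.exp (-(u - ε/2) * x)) μ :=
      int_mom _ _ hu₀
    have hres := hasDerivAt_integral_of_dominated_loc_of_deriv_le
      (F := fun t (x : ℝ) => x ^ n * Real.exp (-t * x))
      (F' := fun t (x : ℝ) => -(x ^ (n+1) * Real.exp (-t * x)))
      (bound := fun x => x^(n+1) * Real.exp (-(u - ε/2) * x))
      (x₀ := u) (Metric.ball_mem_nhds u (half_pos hε))
      (Eventually.of_forall fun t => (hcont n t).aestronglyMeasurable)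
      (int_mom n u hu)
      (((hcont (n+1) u).neg).aestronglyMeasurable)
      ?_ hbound ?_
    · have h2 := hres.2
      rw [integral_neg] at h2
      exact h2
    · filter_upwards [hae] with x hx
      intro s hs
      rw [Metric.mem_ball, Real.dist_eq] at hs
      have hsu : u - ε/2 ≤ s := by
        rcases abs_lt.1 hs with ⟨h1, h2⟩
        linarith
      rw [norm_neg, Real.norm_eq_abs, abs_of_nonneg (by positivity)]
      apply mul_le_mul_of_nonneg_left _ (by positivity)
      apply Real.exp_le_exp.2
      nlinarith
    · filter_upwards with x
      intro s hs
      have h1 : HasDerivAt (fun t : ℝ => -t * x) (-1 * x) s :=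
        ((hasDerivAt_id s).neg).mul_const x
      have h2 := (h1.exp).const_mul (x ^ n)
      refine h2.congr_deriv ?_
      ring
  -- basic consequences
  have hVhat_eq : Vhat = M 0 := by
    funext u
    rw [hVhat]
    simp [hM]
  have hMnonneg : ∀ (n : ℕ) (u : ℝ), 0 ≤ M n u := by
    intro n u
    apply integral_nonneg_of_ae
    filter_upwards [hae] with x hx
    positivity
  have hM0pos : ∀ u ∈ interior D, 0 < M 0 u := by
    intro u hu
    have hi : Integrable (fun x => Real.exp (-u * x)) μ := hDint u hu
    have hMe : M 0 u = ∫ x, Real.exp (-u * x) ∂μ := by simp [hM]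
    rw [hMe, integral_pos_iff_support_of_nonneg_ae
      (Eventually.of_forall fun x => (Real.exp_pos _).le) hi]
    have hs : (Function.support fun x : ℝ => Real.exp (-u * x)) = univ :=
      eq_univ_of_forall fun x => (Real.exp_pos _).ne'
    rw [hs]
    exact Measure.measure_univ_pos.2 hμne
  have hVhatDeriv : ∀ u ∈ interior D, HasDerivAt Vhat (-(M 1 u)) u := by
    intro u hu
    rw [hVhat_eq]
    exact hMderiv 0 u hu
  have hlamderiv : ∀ u ∈ interior D, deriv lam u = -(M 1 u) / M 0 u := by
    intro u hu
    have h := (hVhatDeriv u hu).log (by rw [hVhat_eq]; exact (hM0pos u hu).ne')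
    have hlamf : lam = fun v => Real.log (Vhat v) := funext hlam
    rw [hlamf]
    rw [hVhat_eq] at h ⊢
    exact h.deriv
  have hd1 : ∀ u ∈ interior D, deriv Vhat u = -(M 1 u) := fun u hu => (hVhatDeriv u hu).deriv
  have hd2 : ∀ u ∈ interior D, iteratedDeriv 2 Vhat u = M 2 u := by
    intro u hu
    have hev : deriv Vhat =ᶠ[𝓝 u] fun v => -(M 1 v) :=
      eventually_of_mem (isOpen_interior.mem_nhds hu) (fun v hv => hd1 v hv)
    have : iteratedDeriv 2 Vhat u = deriv (deriv Vhat) u := by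
      rw [show (2:ℕ) = 1 + 1 from rfl, iteratedDeriv_succ, iteratedDeriv_one]
    rw [this, hev.deriv_eq]
    have h2 : HasDerivAt (fun v => -(M 1 v)) (-(-(M 2 u))) u := (hMderiv 1 u hu).neg
    rw [h2.deriv, neg_neg]
  have hd3 : ∀ u ∈ interior D, iteratedDeriv 3 Vhat u = -(M 3 u) := by
    intro u hu
    have hev : iteratedDeriv 2 Vhat =ᶠ[𝓝 u] fun v => M 2 v :=
      eventually_of_mem (isOpen_interior.mem_nhds hu) (fun v hv => hd2 v hv)
    have : iteratedDeriv 3 Vhat u = deriv (iteratedDeriv 2 Vhat) u := by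
      rw [show (3:ℕ) = 2 + 1 from rfl, iteratedDeriv_succ]
    rw [this, hev.deriv_eq]
    exact (hMderiv 2 u hu).deriv
  -- integrals with respect to the tilted measure
  have hνint : ∀ (u : ℝ) (f : ℝ → ℝ),
      ∫ x, f x ∂(ν u) = (Vhat u)⁻¹ * ∫ x, Real.exp (-u * x) * f x ∂μ := by
    intro u f
    rw [hν u, integral_smul_measure]
    have hmeas : Measurable (fun x : ℝ => Real.toNNReal (Real.exp (-u * x))) :=
      (Real.measurable_exp.comp (measurable_const.mul measurable_id)).real_toNNReal
    rw [show (fun x : ℝ => ENNReal.ofReal (Real.exp (-u * x)))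
        = (fun x : ℝ => ((Real.toNNReal (Real.exp (-u * x)) : NNReal) : ℝ≥0∞)) from rfl]
    rw [integral_withDensity_eq_integral_smul hmeas]
    rw [smul_eq_mul, ENNReal.toReal_inv, ENNReal.toReal_ofReal (by rw [hVhat]; positivity)]
    congr 1
    refine integral_congr_ae (Eventually.of_forall fun x => ?_)
    show (Real.exp (-u * x)).toNNReal • f x = Real.exp (-u * x) * f x
    rw [NNReal.smul_def, Real.coe_toNNReal _ (Real.exp_nonneg _)]
    rw [smul_eq_mul]
  -- the key third-moment inequality
  have key : ∀ s ∈ interior D,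
      ∫ x, |x - (-deriv lam s)| ^ 3 ∂(ν s)
        ≤ 4 * (|deriv lam s| ^ 3 + |iteratedDeriv 3 Vhat s| / Vhat s) := by
    intro s hs
    set m : ℝ := M 1 s / M 0 s with hm
    have hVpos : 0 < Vhat s := by rw [hVhat_eq]; exact hM0pos s hs
    have hds : deriv lam s = -(M 1 s) / M 0 s := hlamderiv s hs
    have hmnn : 0 ≤ m := div_nonneg (hMnonneg 1 s) (hMnonneg 0 s)
    have hnd : -deriv lam s = m := by rw [hds, neg_div, neg_neg]
    have habs : |deriv lam s| = m := by
      rw [hds, neg_div, abs_neg, abs_of_nonneg hmnn]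
    have h3 : |iteratedDeriv 3 Vhat s| = M 3 s := by
      rw [hd3 s hs, abs_neg, abs_of_nonneg (hMnonneg 3 s)]
    have hint0 : Integrable (fun x => Real.exp (-s * x)) μ := hDint s hs
    rw [hνint s, hnd]
    have hbound : ∫ x, Real.exp (-s * x) * |x - m| ^ 3 ∂μ
        ≤ ∫ x, ((4 * m^3) * Real.exp (-s * x) + 4 * (x^3 * Real.exp (-s * x))) ∂μ := by
      apply integral_mono_of_nonneg
      · filter_upwards with x
        positivity
      · exact (hint0.const_mul _).add ((int_mom 3 s hs).const_mul 4)
      · filter_upwards [hae] with x hx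
        have h1 : |x - m| ^ 3 ≤ 4 * x^3 + 4 * m^3 := by
          rcases le_total m x with h | h
          · rw [abs_of_nonneg (by linarith)]
            have h2 : (x - m)^3 ≤ x^3 := pow_le_pow_left₀ (by linarith) (by linarith) 3
            nlinarith [pow_nonneg hmnn 3, pow_nonneg hx 3]
          · rw [abs_of_nonpos (by linarith)]
            have h2 : (-(x - m))^3 ≤ m^3 := pow_le_pow_left₀ (by linarith) (by linarith) 3
            nlinarith [pow_nonneg hmnn 3, pow_nonneg hx 3]
        calc Real.exp (-s * x) * |x - m| ^ 3
            ≤ Real.exp (-s * x) * (4 * x^3 + 4 * m^3) :=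
              mul_le_mul_of_nonneg_left h1 (Real.exp_nonneg _)
          _ = (4 * m^3) * Real.exp (-s * x) + 4 * (x^3 * Real.exp (-s * x)) := by ring
    have hM0e : ∫ x, Real.exp (-s * x) ∂μ = M 0 s := by simp [hM]
    have hcalc : ∫ x, ((4 * m^3) * Real.exp (-s * x) + 4 * (x^3 * Real.exp (-s * x))) ∂μ
        = 4 * m^3 * M 0 s + 4 * M 3 s := by
      rw [integral_add (hint0.const_mul _) ((int_mom 3 s hs).const_mul 4),
        integral_const_mul, integral_const_mul, hM0e]
    calc (Vhat s)⁻¹ * ∫ x, Real.exp (-s * x) * |x - m| ^ 3 ∂μ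
        ≤ (Vhat s)⁻¹ * (4 * m^3 * M 0 s + 4 * M 3 s) := by
          apply mul_le_mul_of_nonneg_left (hbound.trans_eq hcalc) (inv_nonneg.2 hVpos.le)
      _ = 4 * (m ^ 3 + M 3 s / M 0 s) := by
          rw [hVhat_eq]
          have h0 : M 0 s ≠ 0 := (hM0pos s hs).ne'
          field_simp
      _ = 4 * (|deriv lam s| ^ 3 + |iteratedDeriv 3 Vhat s| / Vhat s) := by
          rw [habs, h3, hVhat_eq]
  refine ⟨key, ?_⟩
  -- the second part
  intro hTo
  have hdiv : Tendsto (fun j => T j / a j) atTop (𝓝 0) := hTo.tendsto_div_nhds_zero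
  have hB : Tendsto (fun j => 4 * |T j / a j|) atTop (𝓝 0) := by
    have h1 := hdiv.abs
    rw [abs_zero] at h1
    have h2 := h1.const_mul (4:ℝ)
    simpa using h2
  apply squeeze_zero_norm' _ hB
  filter_upwards [hκ, eventually_ge_atTop 1] with j hj hj1
  obtain ⟨hjD, hjm⟩ := hj
  set σ2 := iteratedDeriv 2 lam (κ j) with hσ2
  have hLnn : 0 ≤ L j := by
    rw [hL]
    apply mul_nonneg (by positivity)
    apply integral_nonneg
    intro x
    positivity
  rcases eq_or_lt_of_le (Real.sqrt_nonneg σ2) with h0 | hpos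
  · have hLj : L j = 0 := by
      rw [hL]
      simp [← hσ2, ← h0]
    rw [hLj, norm_zero]
    positivity
  · have hσpos : 0 < σ2 := Real.sqrt_pos.1 hpos
    set σ := Real.sqrt σ2 with hσ
    have hσsq : σ ^ 2 = σ2 := Real.sq_sqrt hσpos.le
    have hjpos : (0:ℝ) < (j:ℝ) := by exact_mod_cast Nat.lt_of_lt_of_le Nat.zero_lt_one hj1
    have hja : a j = Real.sqrt (j:ℝ) * σ := by
      rw [ha, ← hσ2, Real.sqrt_mul (Nat.cast_nonneg j)]
    have hVpos : 0 < Vhat (κ j) := by rw [hVhat_eq]; exact hM0pos _ hjD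
    have hkey := key (κ j) hjD
    rw [hjm] at hkey
    have hrw : ∀ x : ℝ, |(x - t j / (j:ℝ)) / σ| ^ 3 = |x - t j / (j:ℝ)| ^ 3 / σ ^ 3 := by
      intro x
      rw [abs_div, div_pow, abs_of_nonneg (Real.sqrt_nonneg _)]
    have hLeq : L j = ((j:ℝ) ^ ((1:ℝ)/2))⁻¹ *
        ((∫ x, |x - t j / (j:ℝ)| ^ 3 ∂(ν (κ j))) / σ ^ 3) := by
      rw [hL]
      simp_rw [← hσ2, ← hσ, hrw]
      rw [integral_div]
    have hsj : (0:ℝ) < Real.sqrt j := Real.sqrt_pos.2 hjpos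
    have heq : ((j:ℝ) ^ ((1:ℝ)/2))⁻¹ *
        ((4 * (|deriv lam (κ j)| ^ 3 + |iteratedDeriv 3 Vhat (κ j)| / Vhat (κ j))) / σ ^ 3)
        = 4 * (T j / a j) := by
      rw [hT, hja, show ((j:ℝ) ^ ((1:ℝ)/2)) = Real.sqrt (j:ℝ) from (Real.sqrt_eq_rpow _).symm,
        ← hσ2, ← hσsq]
      field_simp
    have hmain : L j ≤ 4 * (T j / a j) := by
      rw [hLeq, ← heq]
      apply mul_le_mul_of_nonneg_left _ (by positivity)
      exact (div_le_div_iff_of_pos_right (by positivity)).2 hkey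
    calc ‖L j‖ = L j := Real.norm_of_nonneg hLnn
      _ ≤ 4 * (T j / a j) := hmain
      _ ≤ 4 * |T j / a j| := mul_le_mul_of_nonneg_left (le_abs_self _) (by norm_num)
end
end
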